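/- arXiv:1712.02648 — 9 statements merged into one kernel-verified Lean document; each statement's English description precedes it below -/
import Mathlib

section
/- Suppose 1 ≤ R < m and Σ_{k≥1} μ_k R^{−k} < ∞. Then: (i) the vector v belongs to ℓ²_R; (ii) χ defines a bounded (continuous) linear functional on ℓ²_R; and (iii) T defines a bounded linear operator on ℓ²_R. -/
open scoped BigOperators ENNReal

noncomputable section

abbrev H2 : Type := lp (fun _ : ℕ => ℂ) 2

/-- the vector `v = (m^{-k} 1[k ≥ 1])_k` -/
def vSeq (m : ℝ) : ℕ → ℂ := fun k => if k = 0 then 0 else ((m : ℂ))⁻¹ ^ k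

/-- the shift `S` -/
def shiftSeq (a : ℕ → ℂ) : ℕ → ℂ := fun k => if k = 0 then 0 else a (k - 1)

/-- the terms of the series defining `χ(a)` -/
def chiSum (μ : ℕ → ℝ) (a : ℕ → ℂ) : ℕ → ℂ := fun k => (μ (k+1) : ℂ) * (a (k+1) - a k)

/-- the linear functional `χ` -/
def chiSeq (μ : ℕ → ℝ) (a : ℕ → ℂ) : ℂ := ∑' k, chiSum μ a k

/-- the operator `T = S + χ(·) v` -/
def Tseq (μ : ℕ → ℝ) (m : ℝ) (a : ℕ → ℂ) : ℕ → ℂ :=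
  fun k => shiftSeq a k + chiSeq μ a * vSeq m k

/-- membership in `ℓ²_R` -/
def memEllR (R : ℝ) (a : ℕ → ℂ) : Prop :=
  Summable fun k => R ^ (2 * k) * ‖a k‖ ^ 2

/-- from the standard `ℓ²` model to an `ℓ²_R` sequence -/
def fromModel (R : ℝ) (b : ℕ → ℂ) : ℕ → ℂ := fun k => ((R : ℂ))⁻¹ ^ k * b k

/-- from an `ℓ²_R` sequence to its standard `ℓ²` model -/
def toModel (R : ℝ) (a : ℕ → ℂ) : ℕ → ℂ := fun k => (R : ℂ) ^ k * a k

/-- the generating function `μ̂(z) = Σ_{k≥1} μ_k z^k` -/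
def genFun (μ : ℕ → ℝ) (z : ℂ) : ℂ := ∑' k, (μ (k+1) : ℂ) * z ^ (k+1)

/-- `T'` is the bounded operator on the standard `ℓ²` model corresponding to `T` on `ℓ²_R`
under the isometric isomorphism `(a_k)_k ↦ (R^k a_k)_k`. -/
def Intertwines (μ : ℕ → ℝ) (m R : ℝ) (T' : H2 →L[ℂ] H2) : Prop :=
  ∀ b : H2, ∀ k, (T' b : ℕ → ℂ) k = toModel R (Tseq μ m (fromModel R (b : ℕ → ℂ))) k

/-! ### Auxiliary material for the proof -/

lemma shiftSeq_memℓp (b : H2) : Memℓp (shiftSeq (⇑b)) 2 := by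
  apply memℓp_gen
  have h := (lp.memℓp b).summable (p := 2) (by norm_num)
  rw [← summable_nat_add_iff 1]
  simpa [shiftSeq] using h

lemma shiftSeq_norm (b : H2) : ‖(⟨shiftSeq (⇑b), shiftSeq_memℓp b⟩ : H2)‖ = ‖b‖ := by
  rw [lp.norm_eq_tsum_rpow (by norm_num), lp.norm_eq_tsum_rpow (by norm_num) b]
  congr 1
  have hb := (lp.memℓp b).summable (p := 2) (by norm_num)
  have h1 : HasSum (fun n => ‖shiftSeq (⇑b) (n+1)‖ ^ (2:ℝ≥0∞).toReal)
      (∑' k, ‖(⇑b) k‖ ^ (2:ℝ≥0∞).toReal) := by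
    simpa [shiftSeq] using hb.hasSum
  have h2 := (hasSum_nat_add_iff
    (f := fun k => ‖shiftSeq (⇑b) k‖ ^ (2:ℝ≥0∞).toReal) 1).mp h1
  have h0 : ‖shiftSeq (⇑b) 0‖ ^ (2:ℝ≥0∞).toReal = 0 := by
    have hz : shiftSeq (⇑b) 0 = 0 := rfl
    rw [hz, norm_zero, Real.zero_rpow (by norm_num)]
  simp only [Finset.range_one, Finset.sum_singleton, h0, add_zero] at h2
  exact h2.tsum_eq

/-- the shift as a bounded operator on the standard `ℓ²` model -/
def shiftCLM : H2 →L[ℂ] H2 :=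
  LinearMap.mkContinuous
    { toFun := fun b => (⟨shiftSeq (⇑b), shiftSeq_memℓp b⟩ : H2)
      map_add' := by
        intro x y
        apply lp.ext
        funext k
        cases k with
        | zero => simp [shiftSeq, lp.coeFn_add]; show (0:ℂ) = shiftSeq (⇑x) 0 + shiftSeq (⇑y) 0; simp [shiftSeq]
        | succ n => simp [shiftSeq, lp.coeFn_add]; show x n + y n = shiftSeq (⇑x) (n+1) + shiftSeq (⇑y) (n+1); simp [shiftSeq]
      map_smul' := by
        intro c x
        apply lp.ext
        funext k
        cases k with
        | zero => simp [shiftSeq, lp.coeFn_smul]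
        | succ n => simp [shiftSeq, lp.coeFn_smul] }
    1 (fun b => by rw [one_mul]; exact le_of_eq (shiftSeq_norm b))

lemma shiftCLM_coe (b : H2) : (shiftCLM b : ℕ → ℂ) = shiftSeq (⇑b) := rfl

/-- If `1 ≤ R < m` and `Σ_{k≥1} μ_k R^{-k} < ∞`, then (i) `v ∈ ℓ²_R`;
(ii) `χ` defines a bounded linear functional on `ℓ²_R`; (iii) `T` defines a bounded linear
operator on `ℓ²_R` (both expressed in the standard `ℓ²` model via `(a_k) ↦ (R^k a_k)`). -/
theorem statement0
    (μ : ℕ → ℝ) (m R : ℝ)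
    (hm : 1 < m) (hμnn : ∀ k, 0 ≤ μ k)
    (hμm : HasSum (fun k : ℕ => μ (k + 1) * (m⁻¹) ^ (k + 1)) 1)
    (hR1 : 1 ≤ R) (hRm : R < m)
    (hμR : Summable fun k : ℕ => μ (k + 1) * (R⁻¹) ^ (k + 1)) :
    memEllR R (vSeq m) ∧
    (∃ φ : H2 →L[ℂ] ℂ, ∀ b : H2,
      HasSum (chiSum μ (fromModel R (b : ℕ → ℂ))) (φ b)) ∧
    (∃ T' : H2 →L[ℂ] H2, Intertwines μ m R T') := by
  have hR0 : (0:ℝ) < R := lt_of_lt_of_le one_pos hR1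
  have hm0 : (0:ℝ) < m := lt_trans one_pos hm
  have hRne : (R:ℝ) ≠ 0 := ne_of_gt hR0
  have hmne : (m:ℝ) ≠ 0 := ne_of_gt hm0
  have hRCne : (R:ℂ) ≠ 0 := by exact_mod_cast hRne
  have hmCne : (m:ℂ) ≠ 0 := by exact_mod_cast hmne
  have hq : (R/m)^2 < 1 := by
    have h1 : R / m < 1 := (div_lt_one hm0).mpr hRm
    have h0 : 0 ≤ R / m := le_of_lt (div_pos hR0 hm0)
    nlinarith
  have hq0 : 0 ≤ (R/m)^2 := sq_nonneg _
  have hgeom : Summable fun k : ℕ => ((R/m)^2) ^ k :=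
    summable_geometric_of_lt_one hq0 hq
  -- (i)
  have hmemv : memEllR R (vSeq m) := by
    apply Summable.of_nonneg_of_le (fun k => ?_) (fun k => ?_) hgeom
    · positivity
    · cases k with
      | zero => simp [vSeq]
      | succ n =>
        have hnorm : ‖vSeq m (n+1)‖ = (m⁻¹) ^ (n+1) := by
          simp only [vSeq, Nat.succ_ne_zero, if_false]
          rw [norm_pow, norm_inv, Complex.norm_real, Real.norm_eq_abs, abs_of_pos hm0]
        rw [hnorm]
        apply le_of_eq
        field_simp
        ring
  -- common summability facts
  have hμR' : Summable fun j : ℕ => μ (j + 1) * (R⁻¹) ^ j := by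
    have h := hμR.mul_left R
    apply h.congr
    intro j
    rw [pow_succ, show R * (μ (j + 1) * (R⁻¹ ^ j * R⁻¹)) = μ (j + 1) * R⁻¹ ^ j * (R * R⁻¹) by ring, mul_inv_cancel₀ hRne, mul_one]
  have hμRshift : Summable fun j : ℕ => (if j = 0 then 0 else μ j * (R⁻¹) ^ j) := by
    rw [← summable_nat_add_iff 1]
    simpa using hμR
  -- the representing vector w of the functional χ in the model
  set wR : ℕ → ℝ := fun j => (if j = 0 then 0 else μ j * (R⁻¹) ^ j) - μ (j+1) * (R⁻¹) ^ j
    with hwR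
  have hwabs : Summable fun j => |wR j| := by
    apply Summable.of_nonneg_of_le (fun j => abs_nonneg _) (fun j => ?_)
      (hμRshift.add hμR')
    have h1 : 0 ≤ (if j = 0 then 0 else μ j * (R⁻¹) ^ j) := by
      split
      · exact le_refl 0
      · exact mul_nonneg (hμnn _) (by positivity)
    have h2 : 0 ≤ μ (j+1) * (R⁻¹) ^ j := mul_nonneg (hμnn _) (by positivity)
    calc |wR j| ≤ |if j = 0 then 0 else μ j * (R⁻¹) ^ j| + |μ (j+1) * (R⁻¹) ^ j| :=
          abs_sub _ _
      _ = (if j = 0 then 0 else μ j * (R⁻¹) ^ j) + μ (j+1) * (R⁻¹) ^ j := by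
          rw [abs_of_nonneg h1, abs_of_nonneg h2]
  have hwmem : Memℓp (fun j => ((wR j : ℝ) : ℂ)) 2 := by
    have h1 : Memℓp (fun j => ((wR j : ℝ) : ℂ)) 1 := by
      apply memℓp_gen
      have he : (1:ℝ≥0∞).toReal = 1 := by norm_num
      rw [he]
      simp only [Real.rpow_one]
      apply hwabs.congr
      intro j
      rw [Complex.norm_real, Real.norm_eq_abs]
    exact h1.of_exponent_ge (by norm_num)
  set W : H2 := (⟨fun j => ((wR j : ℝ) : ℂ), hwmem⟩ : H2) with hWdef
  set φ : H2 →L[ℂ] ℂ := innerSL ℂ W with hφ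
  -- the key HasSum statement for χ
  have hchi : ∀ b : H2, HasSum (chiSum μ (fromModel R (b : ℕ → ℂ))) (φ b) := by
    intro b
    have hbd : ∀ j, ‖(b : ℕ → ℂ) j‖ ≤ ‖b‖ := fun j =>
      lp.norm_apply_le_norm two_ne_zero b j
    have hf : Summable fun k => (μ (k+1) : ℂ) * ((R:ℂ)⁻¹ ^ (k+1) * (b : ℕ → ℂ) (k+1)) := by
      apply Summable.of_norm
      apply Summable.of_nonneg_of_le (fun k => norm_nonneg _) (fun k => ?_)
        (hμR.mul_right ‖b‖)
      rw [norm_mul, norm_mul, norm_pow, norm_inv, Complex.norm_real,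
        Complex.norm_real, Real.norm_eq_abs, Real.norm_eq_abs,
        abs_of_nonneg (hμnn _), abs_of_pos hR0, mul_assoc]
      apply mul_le_mul_of_nonneg_left _ (hμnn _)
      exact mul_le_mul_of_nonneg_left (hbd _) (by positivity)
    have hg : Summable fun k => (μ (k+1) : ℂ) * ((R:ℂ)⁻¹ ^ k * (b : ℕ → ℂ) k) := by
      apply Summable.of_norm
      apply Summable.of_nonneg_of_le (fun k => norm_nonneg _) (fun k => ?_)
        (hμR'.mul_right ‖b‖)
      rw [norm_mul, norm_mul, norm_pow, norm_inv, Complex.norm_real,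
        Complex.norm_real, Real.norm_eq_abs, Real.norm_eq_abs,
        abs_of_nonneg (hμnn _), abs_of_pos hR0, mul_assoc]
      apply mul_le_mul_of_nonneg_left _ (hμnn _)
      exact mul_le_mul_of_nonneg_left (hbd _) (by positivity)
    set F : ℂ := ∑' k, (μ (k+1) : ℂ) * ((R:ℂ)⁻¹ ^ (k+1) * (b : ℕ → ℂ) (k+1)) with hF
    set G : ℂ := ∑' k, (μ (k+1) : ℂ) * ((R:ℂ)⁻¹ ^ k * (b : ℕ → ℂ) k) with hG
    have hfF := hf.hasSum
    have hgG := hg.hasSum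
    set d1 : ℕ → ℂ :=
      fun j => (if j = 0 then (0:ℂ) else (μ j : ℂ) * (R:ℂ)⁻¹ ^ j) * (b : ℕ → ℂ) j
      with hd1def
    have h1 : HasSum (fun n => d1 (n + 1)) F := by
      have heq : (fun n => d1 (n + 1))
          = fun n => (μ (n+1) : ℂ) * ((R:ℂ)⁻¹ ^ (n+1) * (b : ℕ → ℂ) (n+1)) := by
        funext n
        simp [hd1def, mul_assoc]
      rw [heq]
      exact hfF
    have hd1 : HasSum d1 F := by
      have h2 := (hasSum_nat_add_iff 1).mp h1
      simpa [hd1def] using h2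
    have hwb : (fun j => (starRingEnd ℂ) (W j) * (b : ℕ → ℂ) j)
        = fun j => d1 j - (μ (j+1) : ℂ) * ((R:ℂ)⁻¹ ^ j * (b : ℕ → ℂ) j) := by
      funext j
      have hWj : ((W : ℕ → ℂ) j) = ((wR j : ℝ) : ℂ) := rfl
      rw [hWj, Complex.conj_ofReal, hwR, hd1def]
      simp only [Complex.ofReal_sub, apply_ite Complex.ofReal]
      split_ifs with h <;> push_cast <;> ring
    have hinner : HasSum (fun j => (starRingEnd ℂ) (W j) * (b : ℕ → ℂ) j) (F - G) := by
      rw [hwb]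
      exact hd1.sub hgG
    have hφb : φ b = F - G := by
      rw [hφ, innerSL_apply_apply]
      have h := lp.hasSum_inner (𝕜 := ℂ) W b
      simp only [RCLike.inner_apply] at h
      rw [show (fun i => (b : ℕ → ℂ) i * (starRingEnd ℂ) (W i)) = fun j => (starRingEnd ℂ) (W j) * (b : ℕ → ℂ) j from funext fun i => mul_comm _ _] at h
      exact h.unique hinner
    have hcs : chiSum μ (fromModel R (⇑b))
        = fun k => (μ (k+1) : ℂ) * ((R:ℂ)⁻¹ ^ (k+1) * (b : ℕ → ℂ) (k+1))
          - (μ (k+1) : ℂ) * ((R:ℂ)⁻¹ ^ k * (b : ℕ → ℂ) k) := by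
      funext k
      simp only [chiSum, fromModel]
      ring
    rw [hcs, hφb]
    exact hfF.sub hgG
  refine ⟨hmemv, ⟨φ, hchi⟩, ?_⟩
  -- (iii)
  have humem : Memℓp (fun k : ℕ => if k = 0 then (0:ℂ) else (((R/m : ℝ)) : ℂ) ^ k) 2 := by
    apply memℓp_gen
    have he : (2:ℝ≥0∞).toReal = 2 := by norm_num
    rw [he]
    have he2 : (2:ℝ) = ((2:ℕ):ℝ) := by norm_num
    simp only [he2, Real.rpow_natCast]
    apply Summable.of_nonneg_of_le (fun k => ?_) (fun k => ?_) hgeom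
    · positivity
    · cases k with
      | zero => simp
      | succ n =>
        have hnorm : ‖(fun k : ℕ => if k = 0 then (0:ℂ) else (((R/m : ℝ)) : ℂ) ^ k) (n+1)‖
            = (R/m) ^ (n+1) := by
          simp only [Nat.succ_ne_zero, if_false]
          rw [norm_pow, Complex.norm_real, Real.norm_eq_abs, abs_of_nonneg (le_of_lt (div_pos hR0 hm0))]
        rw [hnorm, ← pow_mul, ← pow_mul, mul_comm]
  set U : H2 := (⟨fun k : ℕ => if k = 0 then (0:ℂ) else (((R/m : ℝ)) : ℂ) ^ k, humem⟩ : H2)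
    with hUdef
  refine ⟨(R:ℂ) • shiftCLM + φ.smulRight U, ?_⟩
  intro b k
  have hLHS : (((R:ℂ) • shiftCLM + φ.smulRight U) b : ℕ → ℂ) k
      = (R:ℂ) * shiftSeq (⇑b) k + φ b * (U : ℕ → ℂ) k := by
    rw [ContinuousLinearMap.add_apply, ContinuousLinearMap.smul_apply,
      ContinuousLinearMap.smulRight_apply]
    have h1 := congrFun (lp.coeFn_add ((R:ℂ) • shiftCLM b) (φ b • U)) k
    have h2 := congrFun (lp.coeFn_smul (R:ℂ) (shiftCLM b)) k
    have h3 := congrFun (lp.coeFn_smul (φ b) U) k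
    simp only [Pi.add_apply, Pi.smul_apply, smul_eq_mul] at h1 h2 h3
    rw [h1, h2, h3, shiftCLM_coe]
  rw [hLHS]
  have hcseq : chiSeq μ (fromModel R (⇑b)) = φ b := (hchi b).tsum_eq
  simp only [toModel, Tseq, hcseq]
  cases k with
  | zero =>
    simp [shiftSeq, vSeq, hUdef]
  | succ n =>
    have hsh : shiftSeq (fromModel R (⇑b)) (n+1) = (R:ℂ)⁻¹ ^ n * (b : ℕ → ℂ) n := by
      simp [shiftSeq, fromModel]
    have hv : vSeq m (n+1) = ((m:ℂ))⁻¹ ^ (n+1) := by simp [vSeq]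
    rw [show (U : ℕ → ℂ) (n+1) = ((R/m:ℝ):ℂ)^(n+1) from if_neg (t := (0:ℂ)) (Nat.succ_ne_zero n), hsh, hv]
    have hsh2 : shiftSeq (⇑b) (n+1) = (b : ℕ → ℂ) n := by simp [shiftSeq]
    rw [hsh2]
    push_cast
    field_simp
    have hRn : (R:ℂ)^n * (R:ℂ)⁻¹^n = 1 := by rw [← mul_pow, mul_inv_cancel₀ hRCne, one_pow]
    linear_combination (-(R:ℂ) * (b : ℕ → ℂ) n) * hRn
end
end

section
/- Suppose 1 ≤ R < m and Σ_{k≥1} μ_k R^{−k} < ∞. Let λ be a complex number with |λ| > R and λ ≠ m, and define the sequence c(λ) := ((λ^{−k} − m^{−k})/(m − λ))_{k≥0}. Then c(λ) ∈ ℓ²_R and χ(c(λ)) = ((1 − λ)·μ̂(1/λ) + m − 1)/(m − λ). -/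
open scoped BigOperators ENNReal

noncomputable section

/-- For `|λ| > R`, `λ ≠ m`, the sequence
`c(λ)_k = (λ^{-k} − m^{-k})/(m − λ)` lies in `ℓ²_R` and
`χ(c(λ)) = ((1 − λ)μ̂(1/λ) + m − 1)/(m − λ)`. -/
theorem statement2
    (μ : ℕ → ℝ) (m R : ℝ)
    (hm : 1 < m) (hμnn : ∀ k, 0 ≤ μ k)
    (hμm : HasSum (fun k : ℕ => μ (k + 1) * (m⁻¹) ^ (k + 1)) 1)
    (hR1 : 1 ≤ R) (hRm : R < m)
    (hμR : Summable fun k : ℕ => μ (k + 1) * (R⁻¹) ^ (k + 1))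
    (lam : ℂ) (hlam : R < ‖lam‖) (hlamm : lam ≠ (m : ℂ)) :
    memEllR R (fun k => (lam⁻¹ ^ k - ((m : ℂ))⁻¹ ^ k) / ((m : ℂ) - lam)) ∧
    HasSum (chiSum μ (fun k => (lam⁻¹ ^ k - ((m : ℂ))⁻¹ ^ k) / ((m : ℂ) - lam)))
      (((1 - lam) * genFun μ lam⁻¹ + (m : ℂ) - 1) / ((m : ℂ) - lam)) := by
  have hR0 : (0:ℝ) < R := lt_of_lt_of_le one_pos hR1
  have hm0 : (0:ℝ) < m := lt_trans one_pos hm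
  have hlam0 : lam ≠ 0 := by
    intro h; rw [h, norm_zero] at hlam; linarith
  have hmC : ((m:ℂ)) ≠ 0 := by exact_mod_cast hm0.ne'
  have hml : ((m:ℂ)) - lam ≠ 0 := sub_ne_zero.mpr (Ne.symm hlamm)
  have hnml : (0:ℝ) < ‖(m:ℂ) - lam‖ := norm_pos_iff.mpr hml
  set s : ℝ := min ‖lam‖ m with hs
  have hs0 : 0 < s := lt_min (lt_of_le_of_lt hR0.le hlam) hm0
  have hRs : R < s := lt_min hlam hRm
  constructor
  · -- membership in ℓ²_R
    unfold memEllR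
    have hq : (R/s)^2 < 1 := by
      have h1 : R/s < 1 := (div_lt_one hs0).mpr hRs
      have h0 : 0 ≤ R/s := div_nonneg hR0.le hs0.le
      nlinarith
    apply Summable.of_nonneg_of_le
      (f := fun k => (2/‖(m:ℂ)-lam‖)^2 * ((R/s)^2)^k)
    · intro k
      positivity
    · intro k
      have hbound : ‖lam⁻¹ ^ k - ((m:ℂ))⁻¹ ^ k‖ ≤ 2 * s⁻¹ ^ k := by
        calc ‖lam⁻¹ ^ k - ((m:ℂ))⁻¹ ^ k‖
            ≤ ‖lam⁻¹ ^ k‖ + ‖((m:ℂ))⁻¹ ^ k‖ := norm_sub_le _ _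
          _ = ‖lam‖⁻¹ ^ k + |m|⁻¹ ^ k := by
              simp [norm_pow, norm_inv, Complex.norm_real]
          _ ≤ s⁻¹ ^ k + s⁻¹ ^ k := by
              have l1 : ‖lam‖⁻¹ ≤ s⁻¹ := inv_anti₀ hs0 (min_le_left _ _)
              have l2 : |m|⁻¹ ≤ s⁻¹ := by
                rw [abs_of_pos hm0]; exact inv_anti₀ hs0 (min_le_right _ _)
              exact add_le_add (pow_le_pow_left₀ (inv_nonneg.mpr (norm_nonneg _)) l1 k)
                (pow_le_pow_left₀ (inv_nonneg.mpr (abs_nonneg _)) l2 k)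
          _ = 2 * s⁻¹ ^ k := by ring
      have hnorm : ‖(lam⁻¹ ^ k - ((m:ℂ))⁻¹ ^ k) / ((m:ℂ) - lam)‖
          = ‖lam⁻¹ ^ k - ((m:ℂ))⁻¹ ^ k‖ / ‖(m:ℂ) - lam‖ := norm_div _ _
      rw [hnorm]
      have h1 : R ^ (2*k) * (‖lam⁻¹ ^ k - ((m:ℂ))⁻¹ ^ k‖ / ‖(m:ℂ) - lam‖)^2
          ≤ R ^ (2*k) * ((2 * s⁻¹ ^ k) / ‖(m:ℂ) - lam‖)^2 := by
        gcongr
        all_goals first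
          | exact div_nonneg (norm_nonneg _) hnml.le
          | exact hbound
      refine h1.trans (le_of_eq ?_)
      rw [pow_mul]
      field_simp
      all_goals ring
    · exact Summable.mul_left _ (summable_geometric_of_lt_one (by positivity) hq)
  · -- the HasSum statement
    have hlaminv : ‖lam‖⁻¹ ≤ R⁻¹ := inv_anti₀ hR0 hlam.le
    have hA : Summable fun k : ℕ => (μ (k+1) : ℂ) * lam⁻¹ ^ (k+1) := by
      apply Summable.of_norm
      apply Summable.of_nonneg_of_le (f := fun k => μ (k+1) * (R⁻¹) ^ (k+1))
        (fun k => norm_nonneg _) _ hμR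
      intro k
      rw [norm_mul, norm_pow, norm_inv, Complex.norm_real,
        Real.norm_eq_abs, abs_of_nonneg (hμnn _)]
      exact mul_le_mul_of_nonneg_left
        (pow_le_pow_left₀ (inv_nonneg.mpr (norm_nonneg _)) hlaminv _) (hμnn _)
    have hAsum : HasSum (fun k : ℕ => (μ (k+1) : ℂ) * lam⁻¹ ^ (k+1)) (genFun μ lam⁻¹) :=
      hA.hasSum
    have hBsum : HasSum (fun k : ℕ => (μ (k+1) : ℂ) * ((m:ℂ))⁻¹ ^ (k+1)) 1 := by
      have h2 : (fun k : ℕ => (μ (k+1) : ℂ) * ((m:ℂ))⁻¹ ^ (k+1))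
          = Complex.ofRealHom ∘ (fun k : ℕ => μ (k+1) * (m⁻¹) ^ (k+1)) := by
        funext k; simp [Function.comp]
      have h3 := hμm.map Complex.ofRealHom Complex.continuous_ofReal
      rw [h2]
      simpa using h3
    have hsum := ((hAsum.mul_left ((1 - lam)/((m:ℂ) - lam))).add
      (hBsum.mul_left (((m:ℂ) - 1)/((m:ℂ) - lam))))
    have hfun : (fun k : ℕ => (1 - lam)/((m:ℂ) - lam) * ((μ (k+1) : ℂ) * lam⁻¹ ^ (k+1))
        + ((m:ℂ) - 1)/((m:ℂ) - lam) * ((μ (k+1) : ℂ) * ((m:ℂ))⁻¹ ^ (k+1)))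
        = chiSum μ (fun k => (lam⁻¹ ^ k - ((m : ℂ))⁻¹ ^ k) / ((m : ℂ) - lam)) := by
      funext k
      simp only [chiSum]
      rw [div_sub_div_same]
      have e1 : lam⁻¹ ^ k = lam⁻¹ ^ (k+1) * lam := by
        rw [pow_succ, mul_assoc, inv_mul_cancel₀ hlam0, mul_one]
      have e2 : ((m:ℂ))⁻¹ ^ k = ((m:ℂ))⁻¹ ^ (k+1) * (m:ℂ) := by
        rw [pow_succ, mul_assoc, inv_mul_cancel₀ hmC, mul_one]
      rw [e1, e2]
      set a := lam⁻¹ ^ (k+1) with ha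
      set b := ((m:ℂ))⁻¹ ^ (k+1) with hb
      field_simp
      all_goals ring
    rw [hfun] at hsum
    convert hsum using 1
    · rfl
    field_simp
    all_goals ring
end
end

section
/- Suppose 1 ≤ R < m and Σ_{k≥1} μ_k R^{−k} < ∞, so that T is a bounded linear operator on ℓ²_R. Then every complex number λ with |λ| ≤ R belongs to the spectrum of T. (Together with the characterization for |λ| > R, this determines the spectrum of T completely.) -/
open scoped BigOperators ENNReal

noncomputable section

namespace Statement3Aux

/-- coefficients of `χ` as a diagonal functional -/
def dSeq (μ : ℕ → ℝ) : ℕ → ℂ := fun k => (if k = 0 then 0 else (μ k : ℂ)) - (μ (k+1) : ℂ)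

/-- particular solution of the recursion -/
def PSeq (μ : ℕ → ℝ) (lam : ℂ) : ℕ → ℂ :=
  fun k => ∑ j ∈ Finset.range k, lam ^ (k - 1 - j) * dSeq μ j

lemma PSeq_succ (μ : ℕ → ℝ) (lam : ℂ) (k : ℕ) :
    PSeq μ lam (k+1) = lam * PSeq μ lam k + dSeq μ k := by
  unfold PSeq
  rw [Finset.sum_range_succ]
  have h1 : ∀ j ∈ Finset.range k, lam ^ (k + 1 - 1 - j) * dSeq μ j
      = lam * (lam ^ (k - 1 - j) * dSeq μ j) := by
    intro j hj
    rw [Finset.mem_range] at hj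
    have h2 : k + 1 - 1 - j = (k - 1 - j) + 1 := by omega
    rw [h2, pow_succ]
    ring
  rw [Finset.sum_congr rfl h1, ← Finset.mul_sum]
  simp

def Aval (m : ℝ) (lam : ℂ) : ℂ := ∑' k, lam ^ k * vSeq m k

def Bval (μ : ℕ → ℝ) (m : ℝ) (lam : ℂ) : ℂ := ∑' k, PSeq μ lam k * vSeq m k

def cSeq (μ : ℕ → ℝ) (m : ℝ) (lam : ℂ) : ℕ → ℂ :=
  fun k => ((1 + Bval μ m lam) / Aval m lam) * lam ^ k - PSeq μ lam k

lemma cSeq_succ (μ : ℕ → ℝ) (m : ℝ) (lam : ℂ) (k : ℕ) :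
    cSeq μ m lam (k+1) = lam * cSeq μ m lam k - dSeq μ k := by
  unfold cSeq
  rw [PSeq_succ]
  ring

def wSeq (μ : ℕ → ℝ) (m R : ℝ) (lam : ℂ) : ℕ → ℂ :=
  fun k => (starRingEnd ℂ) (cSeq μ m lam k * ((R:ℂ))⁻¹ ^ k)


set_option maxHeartbeats 2000000 in
lemma key (μ : ℕ → ℝ) (m R : ℝ)
    (hm : 1 < m) (hμnn : ∀ k, 0 ≤ μ k)
    (hμm : HasSum (fun k : ℕ => μ (k + 1) * (m⁻¹) ^ (k + 1)) 1)
    (hR1 : 1 ≤ R) (hRm : R < m)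
    (hμR : Summable fun k : ℕ => μ (k + 1) * (R⁻¹) ^ (k + 1))
    (T' : H2 →L[ℂ] H2) (hT' : Intertwines μ m R T')
    (lam : ℂ) (hlam0 : lam ≠ 0) (hlamR : ‖lam‖ < R) :
    lam ∈ spectrum ℂ T' := by
  have hR0 : (0:ℝ) < R := lt_of_lt_of_le one_pos hR1
  have hm0 : (0:ℝ) < m := lt_trans hR0 hRm
  have hRCne : ((R:ℝ) : ℂ) ≠ 0 := by
    simpa using hR0.ne'
  have hmCne : ((m:ℝ) : ℂ) ≠ 0 := by
    simpa using hm0.ne'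
  have hRinv0 : (0:ℝ) ≤ R⁻¹ := by positivity
  have hRinv1 : R⁻¹ ≤ 1 := inv_le_one_of_one_le₀ hR1
  have hmRinv : m⁻¹ ≤ R⁻¹ := by
    exact inv_anti₀ hR0 hRm.le
  have hnormRC : ‖((R:ℝ):ℂ)‖ = R := by
    rw [Complex.norm_real]; exact abs_of_pos hR0
  have hnormmC : ‖((m:ℝ):ℂ)‖ = m := by
    rw [Complex.norm_real]; exact abs_of_pos hm0
  set t : ℝ := ‖lam‖ * R⁻¹ with ht_def
  have ht0 : 0 ≤ t := by positivity
  have ht1 : t < 1 := by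
    rw [ht_def]
    calc ‖lam‖ * R⁻¹ < R * R⁻¹ := by
          exact mul_lt_mul_of_pos_right hlamR (by positivity)
      _ = 1 := mul_inv_cancel₀ hR0.ne'
  -- norm of vSeq
  have hvnorm : ∀ k, ‖vSeq m k‖ ≤ m⁻¹ ^ k := by
    intro k
    unfold vSeq
    rcases Nat.eq_zero_or_pos k with hk | hk
    · subst hk; simp
    · rw [if_neg hk.ne', norm_pow, norm_inv, hnormmC]
  -- norm of dSeq
  have hdb : ∀ j, ‖dSeq μ j‖ ≤ (if j = 0 then 0 else μ j) + μ (j+1) := by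
    intro j
    unfold dSeq
    refine (norm_sub_le _ _).trans ?_
    gcongr
    · rcases Nat.eq_zero_or_pos j with hj | hj
      · subst hj; simp
      · rw [if_neg hj.ne', if_neg hj.ne', Complex.norm_real]
        exact le_of_eq (abs_of_nonneg (hμnn j))
    · rw [Complex.norm_real]; exact le_of_eq (abs_of_nonneg (hμnn (j+1)))
  set u : ℕ → ℝ := fun j => ‖dSeq μ j‖ * R⁻¹ ^ j with hu_def
  have hunn : ∀ j, 0 ≤ u j := fun j => by positivity
  have hu : Summable u := by
    have hF1 : Summable (fun j : ℕ => if j = 0 then 0 else μ j * R⁻¹ ^ j) := by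
      refine (summable_nat_add_iff 1).1 (hμR.congr fun n => ?_)
      simp
    have hF2 : Summable (fun j : ℕ => R * (μ (j+1) * R⁻¹ ^ (j+1))) := hμR.mul_left R
    refine Summable.of_nonneg_of_le hunn (fun j => ?_) (hF1.add hF2)
    have h1 : u j ≤ ((if j = 0 then 0 else μ j) + μ (j+1)) * R⁻¹ ^ j := by
      rw [hu_def]
      exact mul_le_mul_of_nonneg_right (hdb j) (by positivity)
    refine h1.trans (le_of_eq ?_)
    rw [add_mul]
    congr 1
    · split <;> simp
    · rw [pow_succ]
      field_simp
  set g : ℕ → ℝ := fun k => ∑ j ∈ Finset.range k, t ^ (k - 1 - j) * u j with hg_def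
  have hgnn : ∀ k, 0 ≤ g k := by
    intro k
    refine Finset.sum_nonneg fun j _ => ?_
    positivity
  have hg : Summable g := by
    refine (summable_nat_add_iff 1).1 ?_
    have hcauchy : Summable fun n : ℕ => ∑ k ∈ Finset.range (n+1), t ^ k * u (n - k) := by
      refine Summable.of_norm ?_
      refine summable_norm_sum_mul_range_of_summable_norm (f := fun k => t ^ k) (g := u) ?_ ?_
      · refine (summable_geometric_of_lt_one ht0 ht1).congr fun n => ?_
        simp [abs_of_nonneg ht0, abs_pow]
      · exact hu.congr fun n => by simp [abs_of_nonneg (hunn n)]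
    refine hcauchy.congr fun n => ?_
    -- show  ∑_{k<n+1} t^k u (n-k) = g (n+1)
    rw [hg_def]
    have h1 := Finset.sum_range_reflect (fun j => t ^ (n + 1 - 1 - j) * u j) (n+1)
    refine Eq.trans ?_ h1
    refine Finset.sum_congr rfl fun j hj => ?_
    rw [Finset.mem_range] at hj
    have e1 : n + 1 - 1 - (n + 1 - 1 - j) = j := by omega
    have e2 : n + 1 - 1 - j = n - j := by omega
    rw [e1, e2]
  have hPb : ∀ k, ‖PSeq μ lam k‖ * R⁻¹ ^ k ≤ g k := by
    intro k
    have h1 : ‖PSeq μ lam k‖ ≤ ∑ j ∈ Finset.range k, ‖lam‖ ^ (k - 1 - j) * ‖dSeq μ j‖ := by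
      refine (norm_sum_le _ _).trans (le_of_eq ?_)
      refine Finset.sum_congr rfl fun j _ => ?_
      rw [norm_mul, norm_pow]
    calc ‖PSeq μ lam k‖ * R⁻¹ ^ k
        ≤ (∑ j ∈ Finset.range k, ‖lam‖ ^ (k - 1 - j) * ‖dSeq μ j‖) * R⁻¹ ^ k :=
          mul_le_mul_of_nonneg_right h1 (by positivity)
      _ = ∑ j ∈ Finset.range k, ‖lam‖ ^ (k - 1 - j) * ‖dSeq μ j‖ * R⁻¹ ^ k :=
          Finset.sum_mul _ _ _
      _ ≤ g k := by
          rw [hg_def]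
          refine Finset.sum_le_sum fun j hj => ?_
          rw [Finset.mem_range] at hj
          have h2 : R⁻¹ ^ k ≤ R⁻¹ ^ ((k - 1 - j) + j) :=
            pow_le_pow_of_le_one hRinv0 hRinv1 (by omega)
          calc ‖lam‖ ^ (k - 1 - j) * ‖dSeq μ j‖ * R⁻¹ ^ k
              ≤ ‖lam‖ ^ (k - 1 - j) * ‖dSeq μ j‖ * R⁻¹ ^ ((k - 1 - j) + j) := by
                exact mul_le_mul_of_nonneg_left h2 (by positivity)
            _ = t ^ (k - 1 - j) * u j := by
                rw [ht_def, hu_def, mul_pow, pow_add]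
                ring
  -- summability of the weighted c sequence
  set c0 : ℂ := (1 + Bval μ m lam) / Aval m lam with hc0_def
  set W : ℕ → ℝ := fun k => ‖cSeq μ m lam k‖ * R⁻¹ ^ k with hW_def
  have hWnn : ∀ k, 0 ≤ W k := fun k => by positivity
  have hW : Summable W := by
    refine Summable.of_nonneg_of_le hWnn (fun k => ?_)
      (((summable_geometric_of_lt_one ht0 ht1).mul_left ‖c0‖).add hg)
    have h1 : ‖cSeq μ m lam k‖ ≤ ‖c0‖ * ‖lam‖ ^ k + ‖PSeq μ lam k‖ := by
      unfold cSeq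
      rw [← hc0_def]
      refine (norm_sub_le _ _).trans ?_
      rw [norm_mul, norm_pow]
    rw [hW_def]
    calc ‖cSeq μ m lam k‖ * R⁻¹ ^ k
        ≤ (‖c0‖ * ‖lam‖ ^ k + ‖PSeq μ lam k‖) * R⁻¹ ^ k :=
          mul_le_mul_of_nonneg_right h1 (by positivity)
      _ = ‖c0‖ * t ^ k + ‖PSeq μ lam k‖ * R⁻¹ ^ k := by
          rw [ht_def, mul_pow, add_mul]; ring
      _ ≤ ‖c0‖ * t ^ k + g k := by
          have := hPb k
          gcongr
  -- A : geometric value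
  have hqnorm : ‖lam * ((m:ℝ):ℂ)⁻¹‖ < 1 := by
    rw [norm_mul, norm_inv, hnormmC]
    calc ‖lam‖ * m⁻¹ < m * m⁻¹ := by
          exact mul_lt_mul_of_pos_right (hlamR.trans hRm) (by positivity)
      _ = 1 := mul_inv_cancel₀ hm0.ne'
  have hAs : Summable (fun k => lam ^ k * vSeq m k) := by
    refine Summable.of_norm_bounded (g := fun k => (‖lam‖ * m⁻¹) ^ k)
      (summable_geometric_of_lt_one (by positivity) ?_) (fun k => ?_)
    · calc ‖lam‖ * m⁻¹ < m * m⁻¹ := by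
            exact mul_lt_mul_of_pos_right (hlamR.trans hRm) (by positivity)
        _ = 1 := mul_inv_cancel₀ hm0.ne'
    · calc ‖lam ^ k * vSeq m k‖ = ‖lam‖ ^ k * ‖vSeq m k‖ := by rw [norm_mul, norm_pow]
        _ ≤ ‖lam‖ ^ k * m⁻¹ ^ k := mul_le_mul_of_nonneg_left (hvnorm k) (by positivity)
        _ = (‖lam‖ * m⁻¹) ^ k := (mul_pow _ _ _).symm
  have hAval : Aval m lam = (1 - lam * ((m:ℝ):ℂ)⁻¹)⁻¹ * (lam * ((m:ℝ):ℂ)⁻¹) := by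
    unfold Aval
    rw [Summable.tsum_eq_zero_add hAs]
    have h0 : lam ^ 0 * vSeq m 0 = 0 := by simp [vSeq]
    rw [h0, zero_add]
    have h1 : ∀ k : ℕ, lam ^ (k+1) * vSeq m (k+1)
        = (lam * ((m:ℝ):ℂ)⁻¹) ^ k * (lam * ((m:ℝ):ℂ)⁻¹) := by
      intro k
      unfold vSeq
      rw [if_neg (Nat.succ_ne_zero k), ← pow_succ, mul_pow]
    rw [tsum_congr h1, tsum_mul_right, tsum_geometric_of_norm_lt_one hqnorm]
  have hAne : Aval m lam ≠ 0 := by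
    rw [hAval]
    refine mul_ne_zero (inv_ne_zero ?_) (mul_ne_zero hlam0 (inv_ne_zero hmCne))
    intro h
    have : lam * ((m:ℝ):ℂ)⁻¹ = 1 := by
      have := sub_eq_zero.mp h
      exact this.symm
    rw [this] at hqnorm
    simp at hqnorm
  -- B : summability
  have hPRb : ∀ k, ‖PSeq μ lam k‖ ≤ g k * R ^ k := by
    intro k
    have h1 := mul_le_mul_of_nonneg_right (hPb k) (pow_nonneg hR0.le k)
    calc ‖PSeq μ lam k‖ = ‖PSeq μ lam k‖ * R⁻¹ ^ k * R ^ k := by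
          rw [mul_assoc, ← mul_pow, inv_mul_cancel₀ hR0.ne', one_pow, mul_one]
      _ ≤ g k * R ^ k := h1
  have hgle : ∀ k, g k ≤ ∑' i, g i := fun k => Summable.le_tsum hg k fun j _ => hgnn j
  obtain ⟨G, hGdef⟩ : ∃ G : ℝ, G = ∑' i, g i := ⟨_, rfl⟩
  have hgleG : ∀ k, g k ≤ G := fun k => hGdef ▸ hgle k
  have hBs : Summable (fun k => PSeq μ lam k * vSeq m k) := by
    have hRm1 : R * m⁻¹ < 1 := by
      calc R * m⁻¹ < m * m⁻¹ := mul_lt_mul_of_pos_right hRm (by positivity)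
        _ = 1 := mul_inv_cancel₀ hm0.ne'
    have hgeo : Summable (fun k : ℕ => G * (R * m⁻¹) ^ k) :=
      (summable_geometric_of_lt_one (by positivity) hRm1).mul_left G
    refine Summable.of_norm_bounded hgeo (fun k => ?_)
    rw [norm_mul]
    calc ‖PSeq μ lam k‖ * ‖vSeq m k‖ ≤ (g k * R ^ k) * m⁻¹ ^ k := by
          exact mul_le_mul (hPRb k) (hvnorm k) (norm_nonneg _)
            (mul_nonneg (hgnn k) (pow_nonneg hR0.le k))
      _ = g k * (R ^ k * m⁻¹ ^ k) := by ring
      _ ≤ G * (R ^ k * m⁻¹ ^ k) := by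
          exact mul_le_mul_of_nonneg_right (hgleG k) (by positivity)
      _ = G * (R * m⁻¹) ^ k := by rw [mul_pow]
  -- the consistency identity
  have hCvs : Summable (fun k => cSeq μ m lam k * vSeq m k) := by
    refine ((hAs.mul_left c0).sub hBs).congr fun k => ?_
    unfold cSeq
    rw [← hc0_def]
    ring
  have hCv1 : ∑' k, cSeq μ m lam k * vSeq m k = 1 := by
    have h1 : ∀ k : ℕ, cSeq μ m lam k * vSeq m k
        = c0 * (lam ^ k * vSeq m k) - PSeq μ lam k * vSeq m k := by
      intro k
      unfold cSeq
      rw [← hc0_def]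
      ring
    rw [tsum_congr h1, Summable.tsum_sub (hAs.mul_left c0) hBs, tsum_mul_left]
    have h2 : (∑' k, lam ^ k * vSeq m k) = Aval m lam := rfl
    have h3 : (∑' k, PSeq μ lam k * vSeq m k) = Bval μ m lam := rfl
    rw [h2, h3, hc0_def, div_mul_cancel₀ _ hAne]
    ring
  -- the annihilating vector
  have hwnorm : ∀ k, ‖wSeq μ m R lam k‖ = W k := by
    intro k
    unfold wSeq
    rw [RCLike.norm_conj, norm_mul, norm_pow, norm_inv, hnormRC, hW_def]
  have hw2 : Memℓp (wSeq μ m R lam) 2 := by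
    refine memℓp_gen ?_
    have hWW : Summable (fun k => W k * W k) := by
      refine Summable.of_nonneg_of_le (fun k => mul_nonneg (hWnn k) (hWnn k))
        (fun k => ?_) (hW.mul_left (∑' i, W i))
      exact mul_le_mul_of_nonneg_right (Summable.le_tsum hW k fun j _ => hWnn j) (hWnn k)
    refine hWW.congr fun k => ?_
    rw [show ((2:ℝ≥0∞).toReal) = ((2:ℕ):ℝ) by norm_num, Real.rpow_natCast, hwnorm]
    ring
  set w : H2 := (⟨wSeq μ m R lam, hw2⟩ : H2) with hw_def
  have hwcoe : ∀ k, (w : ℕ → ℂ) k = wSeq μ m R lam k := fun k => rfl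
  have hwne : w ≠ 0 := by
    have hdne : ∃ j, dSeq μ j ≠ 0 := by
      by_contra h
      push_neg at h
      have hz : ∀ k, μ (k+1) = 0 := by
        intro k
        induction k with
        | zero =>
            have h0 := h 0
            unfold dSeq at h0
            simp at h0
            exact_mod_cast h0
        | succ n ih =>
            have h0 := h (n+1)
            unfold dSeq at h0
            rw [if_neg (Nat.succ_ne_zero n)] at h0
            have : (μ (n+1) : ℂ) = (μ (n+2) : ℂ) := by
              have := sub_eq_zero.mp h0
              exact this
            have h2 : μ (n+1) = μ (n+2) := by exact_mod_cast this
            rw [← h2]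
            exact ih
      have h0 : (fun k : ℕ => μ (k+1) * m⁻¹ ^ (k+1)) = fun _ => (0:ℝ) :=
        funext fun k => by rw [hz k]; ring
      rw [h0] at hμm
      exact one_ne_zero (hasSum_zero.unique hμm).symm
    obtain ⟨j, hj⟩ := hdne
    have hcne : ∃ k, cSeq μ m lam k ≠ 0 := by
      by_contra h
      push_neg at h
      apply hj
      have h1 := cSeq_succ μ m lam j
      rw [h j, h (j+1)] at h1
      have : (0:ℂ) = - dSeq μ j := by rw [h1]; ring
      rw [eq_comm, neg_eq_zero] at this
      exact this
    obtain ⟨k, hk⟩ := hcne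
    intro hw0
    apply hk
    have h1 : (w : ℕ → ℂ) k = 0 := by rw [hw0]; rfl
    rw [hwcoe k] at h1
    unfold wSeq at h1
    rw [map_eq_zero] at h1
    rcases mul_eq_zero.mp h1 with h2 | h2
    · exact h2
    · exact absurd h2 (pow_ne_zero _ (inv_ne_zero hRCne))
  have hWk : ∀ k, W k = ‖cSeq μ m lam k‖ * R⁻¹ ^ k := fun k => rfl
  -- the annihilation property
  have hann : ∀ b : H2, (inner ℂ w ((algebraMap ℂ (H2 →L[ℂ] H2) lam - T') b) : ℂ) = 0 := by
    intro b
    set x : H2 := (algebraMap ℂ (H2 →L[ℂ] H2) lam - T') b with hx_def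
    set a : ℕ → ℂ := fromModel R (b : ℕ → ℂ) with ha_def
    have hak : ∀ k, a k = ((R:ℝ):ℂ)⁻¹ ^ k * (b : ℕ → ℂ) k := fun k => rfl
    have hab : ∀ k, ‖a k‖ ≤ ‖b‖ * R⁻¹ ^ k := by
      intro k
      rw [hak k, norm_mul, norm_pow, norm_inv, hnormRC, mul_comm]
      exact mul_le_mul_of_nonneg_right
        (lp.norm_apply_le_norm (by norm_num : (2:ℝ≥0∞) ≠ 0) b k) (by positivity)
    set χ : ℂ := chiSeq μ a with hχ_def
    have hxk : ∀ k, (x : ℕ → ℂ) k = lam * (b : ℕ → ℂ) k - ((R:ℝ):ℂ) ^ k * Tseq μ m a k := by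
      intro k
      rw [hx_def]
      rw [ContinuousLinearMap.sub_apply, lp.coeFn_sub, Pi.sub_apply,
        ContinuousLinearMap.algebraMap_apply, lp.coeFn_smul, Pi.smul_apply, smul_eq_mul]
      congr 1
      rw [hT' b k]
      rfl
    have hterm : ∀ k, (starRingEnd ℂ) ((w : ℕ → ℂ) k) * (x : ℕ → ℂ) k
        = lam * (cSeq μ m lam k * a k)
          - (cSeq μ m lam k * shiftSeq a k + χ * (cSeq μ m lam k * vSeq m k)) := by
      intro k
      rw [hxk k, hwcoe k]
      unfold wSeq
      rw [Complex.conj_conj]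
      have hRk : ((R:ℝ):ℂ)⁻¹ ^ k * ((R:ℝ):ℂ) ^ k = 1 := by
        rw [← mul_pow, inv_mul_cancel₀ hRCne, one_pow]
      unfold Tseq
      rw [← hχ_def, hak k]
      linear_combination (-(cSeq μ m lam k) * (shiftSeq a k + χ * vSeq m k)) * hRk
    have hS1 : Summable (fun k => cSeq μ m lam k * a k) := by
      refine Summable.of_norm_bounded (g := fun k => ‖b‖ * W k) (hW.mul_left _) (fun k => ?_)
      beta_reduce
      rw [norm_mul, hWk]
      calc ‖cSeq μ m lam k‖ * ‖a k‖ ≤ ‖cSeq μ m lam k‖ * (‖b‖ * R⁻¹ ^ k) :=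
            mul_le_mul_of_nonneg_left (hab k) (norm_nonneg _)
        _ = ‖b‖ * (‖cSeq μ m lam k‖ * R⁻¹ ^ k) := by ring
    have hS2 : Summable (fun k => cSeq μ m lam k * shiftSeq a k) := by
      refine Summable.of_norm_bounded (g := fun k => (‖b‖ * R) * W k) (hW.mul_left _) (fun k => ?_)
      beta_reduce
      rw [norm_mul, hWk]
      have hsh : ‖shiftSeq a k‖ ≤ ‖b‖ * R * R⁻¹ ^ k := by
        rcases k with _ | j
        · rw [show shiftSeq a 0 = (0:ℂ) from rfl, norm_zero]
          positivity
        · rw [show shiftSeq a (j+1) = a j from rfl]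
          calc ‖a j‖ ≤ ‖b‖ * R⁻¹ ^ j := hab j
            _ = ‖b‖ * R * R⁻¹ ^ (j+1) := by
                rw [pow_succ]
                field_simp
      calc ‖cSeq μ m lam k‖ * ‖shiftSeq a k‖
          ≤ ‖cSeq μ m lam k‖ * (‖b‖ * R * R⁻¹ ^ k) :=
            mul_le_mul_of_nonneg_left hsh (norm_nonneg _)
        _ = ‖b‖ * R * (‖cSeq μ m lam k‖ * R⁻¹ ^ k) := by ring
    have hS2s : Summable (fun k => cSeq μ m lam (k+1) * a k) := by
      refine ((summable_nat_add_iff 1).2 hS2).congr fun k => ?_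
      simp [shiftSeq]
    have h4a : Summable (fun k => ((μ (k+1) : ℝ) : ℂ) * a (k+1)) := by
      refine Summable.of_norm_bounded (g := fun k => ‖b‖ * (μ (k+1) * R⁻¹ ^ (k+1)))
        (hμR.mul_left _) (fun k => ?_)
      beta_reduce
      rw [norm_mul, Complex.norm_real, Real.norm_of_nonneg (hμnn _)]
      calc μ (k+1) * ‖a (k+1)‖ ≤ μ (k+1) * (‖b‖ * R⁻¹ ^ (k+1)) :=
            mul_le_mul_of_nonneg_left (hab (k+1)) (hμnn _)
        _ = ‖b‖ * (μ (k+1) * R⁻¹ ^ (k+1)) := by ring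
    have h4b : Summable (fun k => ((μ (k+1) : ℝ) : ℂ) * a k) := by
      refine Summable.of_norm_bounded (g := fun k => (‖b‖ * R) * (μ (k+1) * R⁻¹ ^ (k+1)))
        (hμR.mul_left _) (fun k => ?_)
      beta_reduce
      rw [norm_mul, Complex.norm_real, Real.norm_of_nonneg (hμnn _)]
      calc μ (k+1) * ‖a k‖ ≤ μ (k+1) * (‖b‖ * R⁻¹ ^ k) :=
            mul_le_mul_of_nonneg_left (hab k) (hμnn _)
        _ = (‖b‖ * R) * (μ (k+1) * R⁻¹ ^ (k+1)) := by
            rw [pow_succ]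
            field_simp
    have hchieq : χ = (∑' k, ((μ (k+1):ℝ):ℂ) * a (k+1)) - ∑' k, ((μ (k+1):ℝ):ℂ) * a k := by
      rw [hχ_def]
      unfold chiSeq
      rw [← Summable.tsum_sub h4a h4b]
      exact tsum_congr fun k => by unfold chiSum; ring
    have hE : Summable (fun k => (if k = 0 then (0:ℂ) else ((μ k:ℝ):ℂ)) * a k) := by
      refine (summable_nat_add_iff 1).1 (h4a.congr fun n => ?_)
      simp
    have hEe : (∑' k, (if k = 0 then (0:ℂ) else ((μ k:ℝ):ℂ)) * a k)
        = ∑' k, ((μ (k+1):ℝ):ℂ) * a (k+1) := by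
      rw [Summable.tsum_eq_zero_add hE]
      simp
    have hDa : (∑' k, dSeq μ k * a k) = χ := by
      have h1 : ∀ k, dSeq μ k * a k
          = (if k = 0 then (0:ℂ) else ((μ k:ℝ):ℂ)) * a k - ((μ (k+1):ℝ):ℂ) * a k := by
        intro k
        unfold dSeq
        ring
      rw [tsum_congr h1, Summable.tsum_sub hE h4b, hEe, hchieq]
    have hinner : (inner ℂ w x : ℂ) = ∑' k, (starRingEnd ℂ) ((w : ℕ → ℂ) k) * (x : ℕ → ℂ) k := by
      rw [lp.inner_eq_tsum]
      exact tsum_congr fun k => by rw [RCLike.inner_apply, mul_comm]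
    rw [hinner, tsum_congr hterm]
    have hS3 : Summable (fun k => χ * (cSeq μ m lam k * vSeq m k)) := hCvs.mul_left χ
    rw [Summable.tsum_sub (hS1.mul_left lam) (hS2.add hS3), Summable.tsum_add hS2 hS3, tsum_mul_left,
      tsum_mul_left, hCv1, mul_one]
    have hT2 : (∑' k, cSeq μ m lam k * shiftSeq a k) = ∑' k, cSeq μ m lam (k+1) * a k := by
      rw [Summable.tsum_eq_zero_add hS2]
      have h0 : cSeq μ m lam 0 * shiftSeq a 0 = 0 := by simp [shiftSeq]
      rw [h0, zero_add]
      exact tsum_congr fun k => by simp [shiftSeq]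
    rw [hT2]
    have hmain : lam * (∑' k, cSeq μ m lam k * a k) - (∑' k, cSeq μ m lam (k+1) * a k) = χ := by
      rw [← tsum_mul_left, ← Summable.tsum_sub (hS1.mul_left lam) hS2s, ← hDa]
      refine tsum_congr fun k => ?_
      have h1 := cSeq_succ μ m lam k
      linear_combination (-(a k)) * h1
    linear_combination hmain
  -- conclude : if `lam - T'` were invertible, `w` would be orthogonal to itself
  rw [spectrum.mem_iff]
  intro hunit
  obtain ⟨N, hN⟩ := hunit.exists_right_inv
  have h1 : (algebraMap ℂ (H2 →L[ℂ] H2) lam - T') (N w) = w := by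
    rw [← ContinuousLinearMap.mul_apply, hN, ContinuousLinearMap.one_apply]
  have h2 := hann (N w)
  rw [h1] at h2
  exact hwne (inner_self_eq_zero.mp h2)



lemma key0 (μ : ℕ → ℝ) (m R : ℝ)
    (T' : H2 →L[ℂ] H2) (hT' : Intertwines μ m R T') :
    (0:ℂ) ∈ spectrum ℂ T' := by
  rw [spectrum.mem_iff]
  intro hunit
  obtain ⟨N, hN⟩ := hunit.exists_right_inv
  set e : H2 := lp.single 2 0 1 with he_def
  have h1 : (algebraMap ℂ (H2 →L[ℂ] H2) (0:ℂ) - T') (N e) = e := by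
    rw [← ContinuousLinearMap.mul_apply, hN, ContinuousLinearMap.one_apply]
  have h2 : (e : ℕ → ℂ) 0 = 1 := by
    rw [he_def, lp.single_apply]
    simp
  have h3 : ((algebraMap ℂ (H2 →L[ℂ] H2) (0:ℂ) - T') (N e) : ℕ → ℂ) 0 = 0 := by
    rw [ContinuousLinearMap.sub_apply, lp.coeFn_sub, Pi.sub_apply,
      ContinuousLinearMap.algebraMap_apply, lp.coeFn_smul, Pi.smul_apply, smul_eq_mul,
      hT' (N e) 0]
    simp [toModel, Tseq, shiftSeq, vSeq]
  rw [h1] at h3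
  rw [h2] at h3
  exact one_ne_zero h3

end Statement3Aux

/-- Under the standing hypotheses, every `λ` with `|λ| ≤ R` belongs to the
spectrum of `T` on `ℓ²_R`. -/
theorem statement3
    (μ : ℕ → ℝ) (m R : ℝ)
    (hm : 1 < m) (hμnn : ∀ k, 0 ≤ μ k)
    (hμm : HasSum (fun k : ℕ => μ (k + 1) * (m⁻¹) ^ (k + 1)) 1)
    (hR1 : 1 ≤ R) (hRm : R < m)
    (hμR : Summable fun k : ℕ => μ (k + 1) * (R⁻¹) ^ (k + 1))
    (T' : H2 →L[ℂ] H2) (hT' : Intertwines μ m R T')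
    (lam : ℂ) (hlam : ‖lam‖ ≤ R) :
    lam ∈ spectrum ℂ T' := by
  rcases eq_or_ne lam 0 with h0 | h0
  · subst h0
    exact Statement3Aux.key0 μ m R T' hT'
  · have hR0 : (0:ℝ) < R := lt_of_lt_of_le one_pos hR1
    have htend : Filter.Tendsto (fun n : ℕ => (((1 - 1/((n:ℝ)+1)) : ℝ) : ℂ) * lam)
        Filter.atTop (nhds lam) := by
      have h1 : Filter.Tendsto (fun n : ℕ => (1:ℝ) - 1/((n:ℝ)+1)) Filter.atTop (nhds 1) := by
        have := tendsto_const_nhds (x := (1:ℝ)) (f := Filter.atTop (α := ℕ))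
        simpa using this.sub tendsto_one_div_add_atTop_nhds_zero_nat
      have h2 : Filter.Tendsto (fun n : ℕ => (((1 - 1/((n:ℝ)+1)) : ℝ) : ℂ))
          Filter.atTop (nhds ((1:ℝ):ℂ)) :=
        (Complex.continuous_ofReal.tendsto _).comp h1
      simpa using h2.mul_const lam
    refine (spectrum.isClosed (𝕜 := ℂ) T').mem_of_tendsto htend ?_
    filter_upwards [Filter.eventually_ge_atTop 1] with n hn
    have hpos : 0 < 1/((n:ℝ)+1) := by positivity
    have hlt : 1/((n:ℝ)+1) < 1 := by
      rw [div_lt_one (by positivity)]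
      have : (1:ℝ) ≤ (n:ℝ) := by exact_mod_cast hn
      linarith
    have hfpos : 0 < 1 - 1/((n:ℝ)+1) := by linarith
    refine Statement3Aux.key μ m R hm hμnn hμm hR1 hRm hμR T' hT' _ ?_ ?_
    · exact mul_ne_zero (by exact_mod_cast hfpos.ne') h0
    · rw [norm_mul, Complex.norm_real, Real.norm_of_nonneg hfpos.le]
      calc (1 - 1/((n:ℝ)+1)) * ‖lam‖ ≤ (1 - 1/((n:ℝ)+1)) * R :=
            mul_le_mul_of_nonneg_left hlam hfpos.le
        _ < 1 * R := by
            exact mul_lt_mul_of_pos_right (by linarith) hR0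
        _ = R := one_mul R
end
end

section
/- Suppose 1 ≤ R < m, Σ_{k≥1} μ_k R^{−k} < ∞, and moreover μ̂(z) ≠ 1 for every complex z with |z| < 1/R and z ≠ 1/m. Then the spectral radius of T on ℓ²_R is at most R, and consequently for every R₁ > R there exists a constant C = C(R₁) such that the operator norm satisfies ‖Tⁿ‖_{ℓ²_R→ℓ²_R} ≤ C·R₁ⁿ for all n ≥ 0. -/
open scoped BigOperators ENNReal

noncomputable section

/-! ### Auxiliary lemmas -/

lemma memℓp_two_iff (f : ℕ → ℂ) : Memℓp f 2 ↔ Summable (fun k => ‖f k‖ ^ (2:ℕ)) := by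
  rw [memℓp_gen_iff (p := 2) (by norm_num)]
  norm_num

lemma norm_sq_eq (f : H2) : ‖f‖ ^ (2:ℕ) = ∑' k, ‖(f : ℕ → ℂ) k‖ ^ (2:ℕ) := by
  have := lp.norm_rpow_eq_tsum (p := 2) (by norm_num) f
  norm_num at this
  exact_mod_cast this
lemma shift_summable {f : ℕ → ℂ} (h : Summable fun k => ‖f k‖ ^ (2:ℕ)) :
    Summable fun k => ‖shiftSeq f k‖ ^ (2:ℕ) := by
  have h2 : Summable fun k => ‖shiftSeq f (k + 1)‖ ^ (2:ℕ) := by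
    simpa [shiftSeq] using h
  exact (summable_nat_add_iff 1).mp h2

lemma shift_tsum_eq {f : ℕ → ℂ} (h : Summable fun k => ‖f k‖ ^ (2:ℕ)) :
    (∑' k, ‖shiftSeq f k‖ ^ (2:ℕ)) = ∑' k, ‖f k‖ ^ (2:ℕ) := by
  rw [Summable.tsum_eq_zero_add (shift_summable h)]
  simp [shiftSeq]

lemma shift_mem (b : H2) : Memℓp (shiftSeq b) 2 :=
  (memℓp_two_iff _).2 (shift_summable ((memℓp_two_iff _).1 b.2))

/-- the shift as a continuous linear map on `ℓ²` -/
def shiftL : H2 →L[ℂ] H2 :=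
  LinearMap.mkContinuous
    { toFun := fun b => (⟨shiftSeq b, shift_mem b⟩ : H2)
      map_add' := by
        intro a b; apply lp.ext; funext k
        simp only [lp.coeFn_add, Pi.add_apply, shiftSeq]
        split <;> simp
      map_smul' := by
        intro c a; apply lp.ext; funext k
        simp only [lp.coeFn_smul, Pi.smul_apply, shiftSeq, RingHom.id_apply, smul_eq_mul]
        split <;> simp }
    1
    (by
      intro b
      have hb : 0 ≤ ‖b‖ := norm_nonneg _
      have h1 : ‖(⟨shiftSeq b, shift_mem b⟩ : H2)‖ ^ (2:ℕ) = ‖b‖ ^ (2:ℕ) := by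
        rw [norm_sq_eq, norm_sq_eq]
        exact shift_tsum_eq ((memℓp_two_iff _).1 b.2)
      show ‖(⟨shiftSeq b, shift_mem b⟩ : H2)‖ ≤ 1 * ‖b‖
      nlinarith [norm_nonneg (⟨shiftSeq b, shift_mem b⟩ : H2)])

@[simp] lemma shiftL_apply (b : H2) (k : ℕ) : (shiftL b : ℕ → ℂ) k = shiftSeq b k := rfl

lemma norm_shiftL_le : ‖shiftL‖ ≤ 1 := by
  apply LinearMap.mkContinuous_norm_le _ zero_le_one
section Phi
variable {μ : ℕ → ℝ} {R : ℝ}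
  (hR1 : 1 ≤ R) (hμnn : ∀ k, 0 ≤ μ k)
  (hμR : Summable fun k : ℕ => μ (k + 1) * (R⁻¹) ^ (k + 1))

include hR1 hμnn in
lemma chi_norm_bound (b : H2) (k : ℕ) :
    ‖chiSum μ (fromModel R b) k‖ ≤ μ (k+1) * R⁻¹ ^ (k+1) * ((1 + R) * ‖b‖) := by
  have hRpos : (0:ℝ) < R := by linarith
  have hb : ∀ j, ‖(b : ℕ → ℂ) j‖ ≤ ‖b‖ := fun j => lp.norm_apply_le_norm two_ne_zero b j
  have hnn : (0:ℝ) ≤ μ (k+1) := hμnn _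
  have hj : ∀ j, ‖fromModel R (b : ℕ → ℂ) j‖ = R⁻¹ ^ j * ‖(b : ℕ → ℂ) j‖ := by
    intro j
    rw [fromModel]
    rw [norm_mul, norm_pow, norm_inv, Complex.norm_real, Real.norm_of_nonneg hRpos.le]
  have h2 : R⁻¹ ^ k = R * R⁻¹ ^ (k+1) := by
    rw [pow_succ, mul_comm, mul_assoc, inv_mul_cancel₀ hRpos.ne', mul_one]
  have hcalc : ‖chiSum μ (fromModel R b) k‖ ≤ μ (k+1) * (R⁻¹ ^ (k+1) * ‖b‖ + R⁻¹ ^ k * ‖b‖) := by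
    rw [chiSum, norm_mul, Complex.norm_real, Real.norm_of_nonneg hnn]
    apply mul_le_mul_of_nonneg_left _ hnn
    refine (norm_sub_le _ _).trans ?_
    rw [hj, hj]
    gcongr
    · exact hb _
    · exact hb _
  refine hcalc.trans (le_of_eq ?_)
  rw [h2]; ring

include hR1 hμnn hμR in
lemma chi_summable (b : H2) : Summable (chiSum μ (fromModel R b)) := by
  apply Summable.of_norm
  exact Summable.of_nonneg_of_le (fun k => norm_nonneg _)
    (chi_norm_bound hR1 hμnn b) (by simpa [mul_assoc] using hμR.mul_right ((1 + R) * ‖b‖))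

include hR1 hμnn hμR in
lemma chi_le (b : H2) :
    ‖chiSeq μ (fromModel R b)‖ ≤ ((∑' k, μ (k+1) * R⁻¹ ^ (k+1)) * (1 + R)) * ‖b‖ := by
  refine (norm_tsum_le_tsum_norm ((chi_summable hR1 hμnn hμR b).norm)).trans ?_
  have := Summable.tsum_le_tsum (chi_norm_bound hR1 hμnn b) ((chi_summable hR1 hμnn hμR b).norm)
    (by simpa [mul_assoc] using hμR.mul_right ((1 + R) * ‖b‖))
  refine this.trans ?_
  rw [tsum_mul_right]
  exact le_of_eq (by ring)

end Phi

/-- the functional `φ` on the `ℓ²` model -/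
def phiCLM (μ : ℕ → ℝ) (R : ℝ) (hR1 : 1 ≤ R) (hμnn : ∀ k, 0 ≤ μ k)
    (hμR : Summable fun k : ℕ => μ (k + 1) * (R⁻¹) ^ (k + 1)) : H2 →L[ℂ] ℂ :=
  LinearMap.mkContinuous
    { toFun := fun b => chiSeq μ (fromModel R b)
      map_add' := by
        intro a b
        have ha := chi_summable hR1 hμnn hμR a
        have hb := chi_summable hR1 hμnn hμR b
        have : chiSum μ (fromModel R ((a + b : H2) : ℕ → ℂ))
            = fun k => chiSum μ (fromModel R a) k + chiSum μ (fromModel R b) k := by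
          funext k
          simp only [chiSum, fromModel, lp.coeFn_add, Pi.add_apply]
          ring
        simp only [chiSeq]
        rw [this, Summable.tsum_add ha hb]
      map_smul' := by
        intro c a
        have ha := chi_summable hR1 hμnn hμR a
        have : chiSum μ (fromModel R ((c • a : H2) : ℕ → ℂ))
            = fun k => c * chiSum μ (fromModel R a) k := by
          funext k
          simp only [chiSum, fromModel, lp.coeFn_smul, Pi.smul_apply, smul_eq_mul]
          ring
        simp only [chiSeq]
        rw [this, tsum_mul_left]; rfl }
    ((∑' k, μ (k+1) * R⁻¹ ^ (k+1)) * (1 + R))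
    (fun b => chi_le hR1 hμnn hμR b)

@[simp] lemma phiCLM_apply (μ : ℕ → ℝ) (R : ℝ) (hR1 : 1 ≤ R) (hμnn : ∀ k, 0 ≤ μ k)
    (hμR : Summable fun k : ℕ => μ (k + 1) * (R⁻¹) ^ (k + 1)) (b : H2) :
    phiCLM μ R hR1 hμnn hμR b = chiSeq μ (fromModel R b) := rfl
/-- solution of the recurrence `a₀ = 0`, `a_{k+1} = z a_k + z m^{-(k+1)}` -/
def aseq (m : ℝ) (z : ℂ) : ℕ → ℂ
  | 0 => 0
  | (k+1) => z * aseq m z k + z * ((m:ℂ))⁻¹ ^ (k+1)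

section Aseq
variable {m : ℝ} {z : ℂ}

lemma aseq_closed (hm : (m:ℂ) ≠ 0) (hmz : (1:ℂ) - (m:ℂ) * z ≠ 0) (k : ℕ) :
    aseq m z k = z * (((m:ℂ))⁻¹ ^ k - z ^ k) / (1 - (m:ℂ) * z) := by
  induction k with
  | zero => simp [aseq]
  | succ k ih =>
    rw [aseq, ih]
    rw [← mul_div_assoc, div_add' _ _ _ hmz, div_eq_div_iff hmz hmz]
    linear_combination (-((1 - (m:ℂ) * z) * z ^ 2 * ((m:ℂ))⁻¹ ^ k)) * mul_inv_cancel₀ hm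

lemma aseq_crit (hm : (m:ℂ) ≠ 0) (k : ℕ) :
    aseq m ((m:ℂ))⁻¹ k = (k : ℂ) * ((m:ℂ))⁻¹ ^ (k+1) := by
  induction k with
  | zero => simp [aseq]
  | succ k ih =>
    rw [aseq, ih]
    push_cast
    ring

lemma aseq_growth {w : ℝ} (hm0 : 0 < m) (hzw : ‖z‖ ≤ w) (hmw : m⁻¹ ≤ w) (hw1 : w ≤ 1)
    (k : ℕ) : ‖aseq m z k‖ ≤ k * w ^ k := by
  have hw0 : 0 ≤ w := le_trans (by positivity) hmw
  induction k with
  | zero => simp [aseq]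
  | succ k ih =>
    rw [aseq]
    have h1 : ‖z * aseq m z k‖ ≤ w * (k * w ^ k) := by
      rw [norm_mul]
      exact mul_le_mul hzw ih (norm_nonneg _) hw0
    have h2 : ‖z * ((m:ℂ))⁻¹ ^ (k+1)‖ ≤ w * w ^ k := by
      rw [norm_mul, norm_pow, norm_inv, Complex.norm_real, Real.norm_of_nonneg hm0.le]
      have : m⁻¹ ^ (k+1) ≤ w ^ (k+1) := pow_le_pow_left₀ (by positivity) hmw _
      calc ‖z‖ * (m⁻¹)^(k+1) ≤ w * w ^ (k+1) := by
            exact mul_le_mul hzw this (by positivity) hw0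
        _ ≤ w * w ^ k := by
            apply mul_le_mul_of_nonneg_left _ hw0
            exact pow_le_pow_of_le_one hw0 hw1 (Nat.le_succ k)
    calc ‖z * aseq m z k + z * ((m:ℂ))⁻¹ ^ (k+1)‖
        ≤ ‖z * aseq m z k‖ + ‖z * ((m:ℂ))⁻¹ ^ (k+1)‖ := norm_add_le _ _
      _ ≤ w * (k * w ^ k) + w * w ^ k := add_le_add h1 h2
      _ = (↑(k+1) : ℝ) * w ^ (k+1) := by push_cast; ring
    
end Aseq

section Key
variable {μ : ℕ → ℝ} {m R : ℝ}

lemma hasSumC (hm : 1 < m)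
    (hμm : HasSum (fun k : ℕ => μ (k + 1) * (m⁻¹) ^ (k + 1)) 1) :
    HasSum (fun k : ℕ => (μ (k+1) : ℂ) * ((m:ℂ))⁻¹ ^ (k+1)) 1 := by
  have := hμm.mapL Complex.ofRealCLM
  simp only [Complex.ofRealCLM_apply] at this
  convert this using 2 with k
  push_cast
  ring
  simp

lemma hasSumC' (hm : 1 < m)
    (hμm : HasSum (fun k : ℕ => μ (k + 1) * (m⁻¹) ^ (k + 1)) 1) :
    HasSum (fun k : ℕ => (μ (k+1) : ℂ) * ((m:ℂ))⁻¹ ^ k) (m:ℂ) := by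
  have hm0 : ((m:ℂ)) ≠ 0 := by
    simp only [ne_eq, Complex.ofReal_eq_zero]; linarith
  have := (hasSumC hm hμm).mul_left (m:ℂ)
  simp only [mul_one] at this
  convert this using 2 with k
  · rfl
  rw [pow_succ]
  field_simp

lemma summable_f2 (hμnn : ∀ k, 0 ≤ μ k) (hR1 : 1 ≤ R)
    (hμR : Summable fun k : ℕ => μ (k + 1) * (R⁻¹) ^ (k + 1))
    {z : ℂ} (hz : ‖z‖ ≤ R⁻¹) :
    Summable (fun k : ℕ => (μ (k+1) : ℂ) * z ^ k) := by
  have hR0 : (0:ℝ) < R := by linarith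
  apply Summable.of_norm
  refine Summable.of_nonneg_of_le (f := fun k => R * (μ (k+1) * R⁻¹ ^ (k+1)))
    (fun k => norm_nonneg _) ?_ ?_
  · intro k
    show ‖(μ (k+1) : ℂ) * z ^ k‖ ≤ R * (μ (k+1) * R⁻¹ ^ (k+1))
    rw [norm_mul, norm_pow, Complex.norm_real, Real.norm_of_nonneg (hμnn _)]
    have h1 : ‖z‖ ^ k ≤ R⁻¹ ^ k := pow_le_pow_left₀ (norm_nonneg _) hz k
    have h2 : R * (μ (k+1) * R⁻¹ ^ (k+1)) = μ (k+1) * R⁻¹ ^ k := by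
      rw [pow_succ]
      field_simp
    rw [h2]
    exact mul_le_mul_of_nonneg_left h1 (hμnn _)
  · exact hμR.mul_left R

lemma genFun_eq {z : ℂ} : genFun μ z = z * ∑' k, (μ (k+1) : ℂ) * z ^ k := by
  rw [genFun, ← tsum_mul_left]
  apply tsum_congr
  intro k
  rw [pow_succ]
  ring

lemma one_sub_chi_ne
    (hm : 1 < m) (hμnn : ∀ k, 0 ≤ μ k)
    (hμm : HasSum (fun k : ℕ => μ (k + 1) * (m⁻¹) ^ (k + 1)) 1)
    (hR1 : 1 ≤ R) (hRm : R < m)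
    (hμR : Summable fun k : ℕ => μ (k + 1) * (R⁻¹) ^ (k + 1))
    (hroot : ∀ z : ℂ, ‖z‖ < R⁻¹ → z ≠ ((m : ℂ))⁻¹ → genFun μ z ≠ 1)
    (z : ℂ) (hz : ‖z‖ < R⁻¹) :
    1 - chiSeq μ (aseq m z) ≠ 0 := by
  have hR0 : (0:ℝ) < R := by linarith
  have hm0R : (0:ℝ) < m := by linarith
  have hm0 : ((m:ℂ)) ≠ 0 := by
    simp only [ne_eq, Complex.ofReal_eq_zero]; linarith
  by_cases hcrit : z = ((m:ℂ))⁻¹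
  · -- critical case z = 1/m
    subst hcrit
    -- real summability of the derivative-type series
    set q : ℝ := R / m with hq
    have hq1 : ‖q‖ < 1 := by
      rw [Real.norm_of_nonneg (by positivity)]
      rw [div_lt_one hm0R]; exact hRm
    have hsq : Summable (fun k : ℕ => ((k:ℝ) + 1) * q ^ (k+1)) := by
      have h := summable_pow_mul_geometric_of_norm_lt_one 1 hq1
      have h2 := (summable_nat_add_iff 1).2 h
      apply h2.congr
      intro k
      push_cast
      ring
    set Btot : ℝ := ∑' k, μ (k+1) * R⁻¹ ^ (k+1) with hBtot
    have hBle : ∀ k, μ (k+1) * R⁻¹ ^ (k+1) ≤ Btot := by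
      intro k
      exact Summable.le_tsum hμR k (fun j _ => mul_nonneg (hμnn _) (by positivity))
    have hminv : m⁻¹ = R⁻¹ * q := by
      rw [hq]
      field_simp
    have hgr : Summable (fun k : ℕ => ((k:ℝ) + 1) * μ (k+1) * (m⁻¹) ^ (k+1)) := by
      refine Summable.of_nonneg_of_le (f := fun (k:ℕ) => ((k:ℝ) + 1) * q ^ (k+1) * Btot)
        (fun k => mul_nonneg (mul_nonneg (by positivity) (hμnn _)) (by positivity)) ?_ ?_
      · intro k
        show ((k:ℝ) + 1) * μ (k+1) * (m⁻¹) ^ (k+1) ≤ ((k:ℝ) + 1) * q ^ (k+1) * Btot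
        have key : ((k:ℝ) + 1) * μ (k+1) * (m⁻¹) ^ (k+1)
            = ((k:ℝ)+1) * q ^ (k+1) * (μ (k+1) * R⁻¹ ^ (k+1)) := by
          rw [hminv, mul_pow]
          ring
        rw [key]
        have hknn : (0:ℝ) ≤ ((k:ℝ)+1) * q ^ (k+1) := by positivity
        exact mul_le_mul_of_nonneg_left (hBle k) hknn
      · exact hsq.mul_right Btot
    set Dr : ℝ := ∑' (k:ℕ), ((k:ℝ) + 1) * μ (k+1) * (m⁻¹) ^ (k+1) with hDr
    have hDr1 : 1 ≤ Dr := by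
      have h1e : (1:ℝ) = ∑' k, μ (k+1) * (m⁻¹) ^ (k+1) := hμm.tsum_eq.symm
      rw [hDr]
      nth_rewrite 1 [h1e]
      apply Summable.tsum_le_tsum _ hμm.summable hgr
      intro k
      have h0 : (0:ℝ) ≤ μ (k+1) * m⁻¹ ^ (k+1) := mul_nonneg (hμnn _) (by positivity)
      nlinarith [mul_nonneg (Nat.cast_nonneg (α := ℝ) k) h0]
    have hgrC : HasSum (fun k : ℕ => ((k:ℂ) + 1) * (μ (k+1):ℂ) * ((m:ℂ))⁻¹ ^ (k+1)) (Dr:ℂ) := by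
      have := hgr.hasSum.mapL Complex.ofRealCLM
      simp only [Complex.ofRealCLM_apply] at this
      rw [hDr]
      convert this using 2 with k
      push_cast
      ring
    have hpt : ∀ k, chiSum μ (aseq m ((m:ℂ))⁻¹) k
        = (((m:ℂ))⁻¹ - 1) * (((k:ℂ) + 1) * (μ (k+1):ℂ) * ((m:ℂ))⁻¹ ^ (k+1))
          + (μ (k+1):ℂ) * ((m:ℂ))⁻¹ ^ (k+1) := by
      intro k
      rw [chiSum, aseq_crit hm0, aseq_crit hm0]
      push_cast
      ring
    have hval : chiSeq μ (aseq m ((m:ℂ))⁻¹)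
        = (((m:ℂ))⁻¹ - 1) * (Dr:ℂ) + 1 := by
      rw [chiSeq, tsum_congr hpt]
      exact ((hgrC.mul_left (((m:ℂ))⁻¹ - 1)).add (hasSumC hm hμm)).tsum_eq
    rw [hval]
    have h1 : (1:ℂ) - ((((m:ℂ))⁻¹ - 1) * (Dr:ℂ) + 1) = (1 - ((m:ℂ))⁻¹) * (Dr:ℂ) := by ring
    rw [h1]
    apply mul_ne_zero
    · rw [sub_ne_zero]
      intro h
      have h2 : ((m:ℂ))⁻¹ = 1 := h.symm
      rw [inv_eq_one] at h2
      rw [Complex.ofReal_eq_one] at h2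
      linarith
    · rw [ne_eq, Complex.ofReal_eq_zero]
      linarith
  · -- non-critical case
    have hmz : (1:ℂ) - (m:ℂ) * z ≠ 0 := by
      rw [sub_ne_zero]
      intro h
      apply hcrit
      have h2 := congrArg (fun w => ((m:ℂ))⁻¹ * w) h
      simpa [inv_mul_cancel_left₀ hm0] using h2.symm
    set S2 : ℂ := ∑' k, (μ (k+1) : ℂ) * z ^ k with hS2
    set c1 : ℂ := z * (((m:ℂ))⁻¹ - 1) / (1 - (m:ℂ) * z) with hc1
    set c2 : ℂ := -(z * (z - 1) / (1 - (m:ℂ) * z)) with hc2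
    have hpt : ∀ k, chiSum μ (aseq m z) k
        = c1 * ((μ (k+1):ℂ) * ((m:ℂ))⁻¹ ^ k) + c2 * ((μ (k+1):ℂ) * z ^ k) := by
      intro k
      rw [chiSum, aseq_closed hm0 hmz, aseq_closed hm0 hmz, hc1, hc2]
      field_simp
      linear_combination ((μ (k+1) : ℂ) * z * ((m:ℂ))⁻¹ ^ k * (1 - z * (m:ℂ))⁻¹) * mul_inv_cancel₀ hm0
    have hval : chiSeq μ (aseq m z) = c1 * (m:ℂ) + c2 * S2 := by
      rw [chiSeq, tsum_congr hpt]
      exact (((hasSumC' hm hμm).mul_left c1).add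
        (((summable_f2 hμnn hR1 hμR hz.le).hasSum).mul_left c2)).tsum_eq
    have hfact : (1 - (m:ℂ) * z) * (1 - chiSeq μ (aseq m z))
        = (1 - z) * (1 - genFun μ z) := by
      rw [hval, genFun_eq, ← hS2, hc1, hc2]
      field_simp
      ring
    have h1z : (1:ℂ) - z ≠ 0 := by
      rw [sub_ne_zero]
      intro h
      rw [← h] at hz
      norm_num at hz
      have : R⁻¹ ≤ 1 := by
        rw [inv_le_one_iff₀]; right; exact hR1
      linarith
    have h1g : (1:ℂ) - genFun μ z ≠ 0 := by
      rw [sub_ne_zero]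
      intro h
      exact hroot z hz hcrit h.symm
    intro h0
    rw [h0, mul_zero] at hfact
    exact (mul_ne_zero h1z h1g) hfact.symm

end Key

/-! ### the vectors `u` and `x` -/

def uSeq (m R : ℝ) : ℕ → ℂ := fun k => (R:ℂ) ^ k * vSeq m k

lemma uSeq_mem {m R : ℝ} (hR0 : 0 < R) (hRm : R < m) : Memℓp (uSeq m R) 2 := by
  rw [memℓp_two_iff]
  have hm0 : (0:ℝ) < m := lt_trans hR0 hRm
  have hq0 : (0:ℝ) ≤ R / m := by positivity
  have hq1 : R / m < 1 := (div_lt_one hm0).2 hRm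
  have hnorm : ∀ k, ‖uSeq m R k‖ ≤ (R/m) ^ k := by
    intro k
    cases k with
    | zero => simp [uSeq, vSeq]
    | succ k =>
      rw [uSeq, vSeq]
      simp only [Nat.succ_ne_zero, if_false]
      rw [norm_mul, norm_pow, norm_pow, norm_inv, Complex.norm_real, Complex.norm_real,
        Real.norm_of_nonneg hR0.le, Real.norm_of_nonneg hm0.le]
      apply le_of_eq
      rw [← mul_pow, ← div_eq_mul_inv]
  refine Summable.of_nonneg_of_le (f := fun k => ((R/m)^2) ^ k)
    (fun k => by positivity) ?_ ?_
  · intro k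
    calc ‖uSeq m R k‖ ^ (2:ℕ) ≤ ((R/m) ^ k) ^ (2:ℕ) := by
          exact pow_le_pow_left₀ (norm_nonneg _) (hnorm k) 2
      _ = ((R/m)^2) ^ k := by rw [← pow_mul, ← pow_mul, Nat.mul_comm]
  · exact summable_geometric_of_lt_one (by positivity) (by nlinarith)

def xSeq (m R : ℝ) (z : ℂ) : ℕ → ℂ := fun k => (R:ℂ) ^ k * aseq m z k

lemma xSeq_mem {m R : ℝ} {z : ℂ} (hm : 1 < m) (hR1 : 1 ≤ R) (hRm : R < m)
    (hz : ‖z‖ < R⁻¹) : Memℓp (xSeq m R z) 2 := by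
  have hR0 : (0:ℝ) < R := by linarith
  have hm0 : (0:ℝ) < m := by linarith
  set w : ℝ := max ‖z‖ m⁻¹ with hw
  have hw0 : 0 ≤ w := le_max_of_le_left (norm_nonneg _)
  have hwR : w < R⁻¹ := by
    apply max_lt hz
    rw [inv_lt_inv₀ hm0 hR0]
    exact hRm
  have hw1 : w ≤ 1 := by
    have : R⁻¹ ≤ 1 := by
      rw [inv_le_one_iff₀]; right; exact hR1
    linarith
  have hgrow := fun k => aseq_growth (z := z) hm0 (le_max_left _ _) (le_max_right _ _) hw1 k
  have hRw : 0 ≤ R * w := by positivity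
  have hRw1 : R * w < 1 := by
    calc R * w < R * R⁻¹ := by
          exact mul_lt_mul_of_pos_left hwR hR0
      _ = 1 := mul_inv_cancel₀ hR0.ne'
  rw [memℓp_two_iff]
  have hnorm : ∀ k, ‖xSeq m R z k‖ ≤ (k:ℝ) * (R*w) ^ k := by
    intro k
    rw [xSeq, norm_mul, norm_pow, Complex.norm_real, Real.norm_of_nonneg hR0.le]
    calc R ^ k * ‖aseq m z k‖ ≤ R ^ k * ((k:ℝ) * w ^ k) := by
          exact mul_le_mul_of_nonneg_left (hgrow k) (by positivity)
      _ = (k:ℝ) * (R*w) ^ k := by rw [mul_pow]; ring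
  refine Summable.of_nonneg_of_le (f := fun (k:ℕ) => (k:ℝ)^2 * ((R*w)^2) ^ k)
    (fun k => by positivity) ?_ ?_
  · intro k
    calc ‖xSeq m R z k‖ ^ (2:ℕ) ≤ ((k:ℝ) * (R*w) ^ k) ^ (2:ℕ) := by
          exact pow_le_pow_left₀ (norm_nonneg _) (hnorm k) 2
      _ = (k:ℝ)^2 * ((R*w)^2) ^ k := by
          rw [mul_pow, ← pow_mul, ← pow_mul, Nat.mul_comm k 2]
  · have h1 : ‖(R*w)^2‖ < 1 := by
      rw [Real.norm_of_nonneg (by positivity)]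
      nlinarith
    have := summable_pow_mul_geometric_of_norm_lt_one 2 h1
    apply this.congr
    intro k
    push_cast
    ring

/-! ### decomposition of `T'` -/

lemma T'_decomp {μ : ℕ → ℝ} {m R : ℝ} (hm : 1 < m) (hμnn : ∀ k, 0 ≤ μ k)
    (hR1 : 1 ≤ R) (hRm : R < m)
    (hμR : Summable fun k : ℕ => μ (k + 1) * (R⁻¹) ^ (k + 1))
    (T' : H2 →L[ℂ] H2) (hT' : Intertwines μ m R T') :
    T' = ((R:ℝ):ℂ) • shiftL + (phiCLM μ R hR1 hμnn hμR).smulRight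
      (⟨uSeq m R, uSeq_mem (by linarith) hRm⟩ : H2) := by
  have hR0 : (0:ℝ) < R := by linarith
  have hR0C : ((R:ℝ):ℂ) ≠ 0 := by
    simp only [ne_eq, Complex.ofReal_eq_zero]; linarith
  ext b k
  rw [hT' b k]
  have hRHS : ((((R:ℝ):ℂ) • shiftL + (phiCLM μ R hR1 hμnn hμR).smulRight
      (⟨uSeq m R, uSeq_mem (by linarith) hRm⟩ : H2)) b : ℕ → ℂ) k
      = ((R:ℝ):ℂ) * shiftSeq b k + chiSeq μ (fromModel R b) * uSeq m R k := by
    rw [ContinuousLinearMap.add_apply, ContinuousLinearMap.smul_apply,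
      ContinuousLinearMap.smulRight_apply]
    rw [lp.coeFn_add, Pi.add_apply, lp.coeFn_smul, Pi.smul_apply, lp.coeFn_smul, Pi.smul_apply]
    rw [shiftL_apply]
    simp only [smul_eq_mul, phiCLM_apply]
  rw [hRHS]
  rw [toModel, Tseq]
  cases k with
  | zero =>
    simp [shiftSeq, vSeq, uSeq]
  | succ k =>
    simp only [shiftSeq, vSeq, uSeq, Nat.succ_ne_zero, if_false, Nat.add_sub_cancel]
    rw [fromModel]
    have hpow : ((R:ℝ):ℂ) ^ (k+1) * (((R:ℝ):ℂ))⁻¹ ^ k = ((R:ℝ):ℂ) := by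
      rw [pow_succ]
      rw [mul_comm (((R:ℝ):ℂ) ^ k)]
      rw [mul_assoc, ← mul_pow, mul_inv_cancel₀ hR0C, one_pow, mul_one]
    calc ((R:ℝ):ℂ) ^ (k+1) * ((((R:ℝ):ℂ))⁻¹ ^ k * (b : ℕ → ℂ) k
            + chiSeq μ (fromModel R b) * ((m:ℂ))⁻¹ ^ (k+1))
        = (((R:ℝ):ℂ) ^ (k+1) * (((R:ℝ):ℂ))⁻¹ ^ k) * (b : ℕ → ℂ) k
            + chiSeq μ (fromModel R b) * (((R:ℝ):ℂ) ^ (k+1) * ((m:ℂ))⁻¹ ^ (k+1)) := by ring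
      _ = _ := by rw [hpow]

/-! ### the resolvent -/

lemma isUnit_lam_sub {μ : ℕ → ℝ} {m R : ℝ}
    (hm : 1 < m) (hμnn : ∀ k, 0 ≤ μ k)
    (hμm : HasSum (fun k : ℕ => μ (k + 1) * (m⁻¹) ^ (k + 1)) 1)
    (hR1 : 1 ≤ R) (hRm : R < m)
    (hμR : Summable fun k : ℕ => μ (k + 1) * (R⁻¹) ^ (k + 1))
    (hroot : ∀ z : ℂ, ‖z‖ < R⁻¹ → z ≠ ((m : ℂ))⁻¹ → genFun μ z ≠ 1)
    (T' : H2 →L[ℂ] H2) (hT' : Intertwines μ m R T')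
    (lam : ℂ) (hlam : R < ‖lam‖) :
    IsUnit (lam • (1 : H2 →L[ℂ] H2) - T') := by
  have hR0 : (0:ℝ) < R := by linarith
  have hR0C : ((R:ℝ):ℂ) ≠ 0 := by
    simp only [ne_eq, Complex.ofReal_eq_zero]; linarith
  have hlampos : (0:ℝ) < ‖lam‖ := by linarith
  have hlam0 : lam ≠ 0 := by
    intro h; rw [h, norm_zero] at hlampos; exact lt_irrefl _ hlampos
  set z : ℂ := lam⁻¹ with hzdef
  have hz : ‖z‖ < R⁻¹ := by
    rw [hzdef, norm_inv]
    exact inv_strictAnti₀ hR0 hlam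
  set φ := phiCLM μ R hR1 hμnn hμR with hφdef
  set u : H2 := (⟨uSeq m R, uSeq_mem hR0 hRm⟩ : H2) with hudef
  set x : H2 := (⟨xSeq m R z, xSeq_mem hm hR1 hRm hz⟩ : H2) with hxdef
  set M : H2 →L[ℂ] H2 := lam • (1 : H2 →L[ℂ] H2) - ((R:ℝ):ℂ) • shiftL with hMdef
  -- M is invertible
  have hMunit : IsUnit M := by
    set t : H2 →L[ℂ] H2 := (lam⁻¹ * ((R:ℝ):ℂ)) • shiftL with htdef
    have ht : ‖t‖ < 1 := by
      rw [htdef]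
      apply lt_of_le_of_lt (ContinuousLinearMap.opNorm_smul_le _ _)
      rw [norm_mul, norm_inv, Complex.norm_real, Real.norm_of_nonneg hR0.le]
      have h1 : ‖lam‖⁻¹ * R < 1 := by
        have h2 := mul_lt_mul_of_pos_left hlam (inv_pos.2 hlampos)
        rwa [inv_mul_cancel₀ hlampos.ne'] at h2
      calc ‖lam‖⁻¹ * R * ‖shiftL‖ ≤ ‖lam‖⁻¹ * R * 1 := by
            exact mul_le_mul_of_nonneg_left norm_shiftL_le (by positivity)
        _ = ‖lam‖⁻¹ * R := mul_one _
        _ < 1 := h1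
    have hMfact : M = lam • ((1 : H2 →L[ℂ] H2) - t) := by
      rw [hMdef, htdef, smul_sub, smul_smul]
      have hc : lam * (lam⁻¹ * ((R:ℝ):ℂ)) = ((R:ℝ):ℂ) := by field_simp
      rw [hc]
    rw [hMfact, Algebra.smul_def]
    exact ((isUnit_iff_ne_zero.2 hlam0).map (algebraMap ℂ (H2 →L[ℂ] H2))).mul
      (Units.oneSub t ht).isUnit
  set B : H2 →L[ℂ] H2 := ↑hMunit.unit⁻¹ with hBdef
  have hBM : B * M = 1 := hMunit.val_inv_mul
  have hMB : M * B = 1 := hMunit.mul_val_inv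
  have hMBb : ∀ y, M (B y) = y := by
    intro y
    rw [← ContinuousLinearMap.mul_apply, hMB, ContinuousLinearMap.one_apply]
  have hBMb : ∀ y, B (M y) = y := by
    intro y
    rw [← ContinuousLinearMap.mul_apply, hBM, ContinuousLinearMap.one_apply]
  -- M x = u
  have hMx : M x = u := by
    apply lp.ext
    funext k
    have hL : ((M x : H2) : ℕ → ℂ) k = lam * xSeq m R z k - ((R:ℝ):ℂ) * shiftSeq (xSeq m R z) k := by
      rw [hMdef, ContinuousLinearMap.sub_apply, ContinuousLinearMap.smul_apply,
        ContinuousLinearMap.smul_apply, ContinuousLinearMap.one_apply]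
      rw [lp.coeFn_sub, Pi.sub_apply, lp.coeFn_smul, Pi.smul_apply, lp.coeFn_smul, Pi.smul_apply]
      rw [shiftL_apply]
      simp only [smul_eq_mul]
      rfl
    rw [hL]
    show lam * xSeq m R z k - ((R:ℝ):ℂ) * shiftSeq (xSeq m R z) k = uSeq m R k
    cases k with
    | zero =>
      simp [xSeq, uSeq, vSeq, shiftSeq, aseq]
    | succ k =>
      simp only [xSeq, uSeq, vSeq, shiftSeq, Nat.succ_ne_zero, if_false, Nat.add_sub_cancel]
      rw [aseq, hzdef]
      have hlz : lam * lam⁻¹ = 1 := mul_inv_cancel₀ hlam0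
      field_simp
      ring
  have hBu : B u = x := by
    rw [← hMx, hBMb]
  -- the scalar c
  have hfrom : fromModel R (x : ℕ → ℂ) = aseq m z := by
    funext k
    show (((R:ℝ):ℂ))⁻¹ ^ k * (((R:ℝ):ℂ) ^ k * aseq m z k) = aseq m z k
    rw [← mul_assoc, ← mul_pow, inv_mul_cancel₀ hR0C, one_pow, one_mul]
  have hφx : φ x = chiSeq μ (aseq m z) := by
    rw [hφdef, phiCLM_apply, hfrom]
  set c : ℂ := 1 - φ x with hcdef
  have hc : c ≠ 0 := by
    rw [hcdef, hφx]
    exact one_sub_chi_ne hm hμnn hμm hR1 hRm hμR hroot z hz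
  have hφxc : φ x = 1 - c := by rw [hcdef]; ring
  set K : H2 →L[ℂ] H2 := φ.smulRight u with hKdef
  have hdecomp : lam • (1 : H2 →L[ℂ] H2) - T' = M - K := by
    rw [T'_decomp hm hμnn hR1 hRm hμR T' hT', hMdef, hKdef, ← hφdef, ← hudef]
    abel
  set A : H2 →L[ℂ] H2 := B + c⁻¹ • ((φ.comp B).smulRight x) with hAdef
  have h1 : (M - K) * A = 1 := by
    apply ContinuousLinearMap.ext
    intro b
    have hAb : A b = B b + (c⁻¹ * φ (B b)) • x := by
      rw [hAdef, ContinuousLinearMap.add_apply, ContinuousLinearMap.smul_apply,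
        ContinuousLinearMap.smulRight_apply, ContinuousLinearMap.comp_apply, smul_smul]
    rw [ContinuousLinearMap.mul_apply, ContinuousLinearMap.one_apply,
      ContinuousLinearMap.sub_apply, hAb]
    rw [map_add M, map_smul M, hMx, hMBb]
    rw [hKdef, ContinuousLinearMap.smulRight_apply, map_add φ, map_smul φ, hφxc]
    rw [smul_eq_mul]
    match_scalars
    · ring
    · field_simp
      ring
  have h2 : A * (M - K) = 1 := by
    apply ContinuousLinearMap.ext
    intro b
    rw [ContinuousLinearMap.mul_apply, ContinuousLinearMap.one_apply,
      ContinuousLinearMap.sub_apply, hKdef, ContinuousLinearMap.smulRight_apply]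
    rw [hAdef, ContinuousLinearMap.add_apply, ContinuousLinearMap.smul_apply,
      ContinuousLinearMap.smulRight_apply, ContinuousLinearMap.comp_apply]
    rw [map_sub B, map_smul B, hBu, hBMb]
    rw [map_sub φ, map_smul φ, hφxc]
    rw [smul_eq_mul]
    match_scalars
    · ring
    · field_simp
      ring
  rw [hdecomp]
  exact ⟨⟨M - K, A, h1, h2⟩, rfl⟩

/-- If moreover `μ̂(z) ≠ 1` for every `z ≠ 1/m` with `|z| < 1/R`, then the
spectral radius of `T` on `ℓ²_R` is at most `R`, and for every `R₁ > R` there is a constant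
`C` with `‖Tⁿ‖ ≤ C R₁ⁿ` for all `n ≥ 0`. -/
theorem statement4
    (μ : ℕ → ℝ) (m R : ℝ)
    (hm : 1 < m) (hμnn : ∀ k, 0 ≤ μ k)
    (hμm : HasSum (fun k : ℕ => μ (k + 1) * (m⁻¹) ^ (k + 1)) 1)
    (hR1 : 1 ≤ R) (hRm : R < m)
    (hμR : Summable fun k : ℕ => μ (k + 1) * (R⁻¹) ^ (k + 1))
    (hroot : ∀ z : ℂ, ‖z‖ < R⁻¹ → z ≠ ((m : ℂ))⁻¹ → genFun μ z ≠ 1)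
    (T' : H2 →L[ℂ] H2) (hT' : Intertwines μ m R T') :
    spectralRadius ℂ T' ≤ ENNReal.ofReal R ∧
    ∀ R₁ : ℝ, R < R₁ → ∃ C : ℝ, ∀ n : ℕ, ‖T' ^ n‖ ≤ C * R₁ ^ n := by
  have hspec : ∀ lam ∈ spectrum ℂ T', ‖lam‖ ≤ R := by
    intro lam hlam
    by_contra hgt
    push_neg at hgt
    have hunit := isUnit_lam_sub hm hμnn hμm hR1 hRm hμR hroot T' hT' lam hgt
    rw [spectrum.mem_iff] at hlam
    apply hlam
    rwa [Algebra.algebraMap_eq_smul_one]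
  have h1 : spectralRadius ℂ T' ≤ ENNReal.ofReal R := by
    rw [spectralRadius]
    apply iSup₂_le
    intro k hk
    rw [← enorm_eq_nnnorm, ← ofReal_norm]
    exact ENNReal.ofReal_le_ofReal (hspec k hk)
  refine ⟨h1, ?_⟩
  intro R₁ hRR₁
  have hR₁0 : (0:ℝ) < R₁ := by linarith
  have hrad : spectralRadius ℂ T' < ENNReal.ofReal R₁ :=
    lt_of_le_of_lt h1 (by rw [ENNReal.ofReal_lt_ofReal_iff hR₁0]; exact hRR₁)
  have htend := spectrum.pow_nnnorm_pow_one_div_tendsto_nhds_spectralRadius T'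
  have hev : ∀ᶠ n : ℕ in Filter.atTop,
      (‖T' ^ n‖₊ : ℝ≥0∞) ^ (1/(n:ℝ)) < ENNReal.ofReal R₁ :=
    htend.eventually_lt_const hrad
  obtain ⟨N, hN⟩ := Filter.eventually_atTop.1 hev
  have hbound : ∀ n, N ≤ n → 1 ≤ n → ‖T' ^ n‖ ≤ R₁ ^ n := by
    intro n hn hn1
    have hn0 : (n:ℝ) ≠ 0 := by
      simp only [ne_eq, Nat.cast_eq_zero]; omega
    have h3 : ((‖T' ^ n‖₊ : ℝ≥0∞) ^ (1/(n:ℝ))) ^ (n:ℝ) ≤ (ENNReal.ofReal R₁) ^ (n:ℝ) :=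
      ENNReal.rpow_le_rpow (hN n hn).le (by positivity)
    rw [← ENNReal.rpow_mul, one_div, inv_mul_cancel₀ hn0, ENNReal.rpow_one] at h3
    rw [← enorm_eq_nnnorm, ← ofReal_norm, ENNReal.ofReal_rpow_of_pos hR₁0, Real.rpow_natCast,
      ENNReal.ofReal_le_ofReal_iff (by positivity)] at h3
    exact h3
  have hbound' : ∀ n, N ≤ n → 1 ≤ n → ‖T' ^ n‖ ≤ R₁ ^ n := hbound
  set N' : ℕ := max N 1 with hN'
  set C : ℝ := 1 + ∑ k ∈ Finset.range N', ‖T' ^ k‖ / R₁ ^ k with hC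
  have hC1 : 1 ≤ C := by
    rw [hC]
    have : (0:ℝ) ≤ ∑ k ∈ Finset.range N', ‖T' ^ k‖ / R₁ ^ k :=
      Finset.sum_nonneg (fun i _ => div_nonneg (norm_nonneg _) (by positivity))
    linarith
  refine ⟨C, ?_⟩
  intro n
  by_cases hn : n < N'
  · have hterm : ‖T' ^ n‖ / R₁ ^ n ≤ ∑ k ∈ Finset.range N', ‖T' ^ k‖ / R₁ ^ k :=
      Finset.single_le_sum (f := fun k => ‖T' ^ k‖ / R₁ ^ k)
        (fun i _ => div_nonneg (norm_nonneg _) (by positivity)) (Finset.mem_range.2 hn)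
    have h5 : ‖T' ^ n‖ / R₁ ^ n ≤ C := by rw [hC]; linarith
    calc ‖T' ^ n‖ = (‖T' ^ n‖ / R₁ ^ n) * R₁ ^ n :=
          (div_mul_cancel₀ ‖T' ^ n‖ (pow_pos hR₁0 n).ne').symm
      _ ≤ C * R₁ ^ n := mul_le_mul_of_nonneg_right h5 (by positivity)
  · push_neg at hn
    have h6 := hbound' n (le_trans (le_max_left _ _) hn) (le_trans (le_max_right _ _) hn)
    calc ‖T' ^ n‖ ≤ R₁ ^ n := h6
      _ = 1 * R₁ ^ n := (one_mul _).symm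
      _ ≤ C * R₁ ^ n := mul_le_mul_of_nonneg_right hC1 (by positivity)
end
end

section
/- Suppose 1 ≤ R < m and Σ_{k≥1} μ_k R^{−k} < ∞. Let γ be a complex number with 0 < |γ| < 1/R, γ ≠ 1/m, and μ̂(γ) = 1. Then the sequence u_γ := (γ^k − m^{−k})_{k≥0} is a nonzero element of ℓ²_R and is an eigenvector of T with eigenvalue 1/γ, i.e., T(u_γ) = γ^{−1}·u_γ. -/
open scoped BigOperators ENNReal

noncomputable section

set_option maxHeartbeats 1000000 in
/-- If `0 < |γ| < 1/R`, `γ ≠ 1/m` and `μ̂(γ) = 1`, then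
`u_γ = (γ^k − m^{-k})_k` is a nonzero element of `ℓ²_R` and `T(u_γ) = γ⁻¹ u_γ`. -/
theorem statement5
    (μ : ℕ → ℝ) (m R : ℝ)
    (hm : 1 < m) (hμnn : ∀ k, 0 ≤ μ k)
    (hμm : HasSum (fun k : ℕ => μ (k + 1) * (m⁻¹) ^ (k + 1)) 1)
    (hR1 : 1 ≤ R) (hRm : R < m)
    (hμR : Summable fun k : ℕ => μ (k + 1) * (R⁻¹) ^ (k + 1))
    (γ : ℂ) (hγ0 : 0 < ‖γ‖) (hγR : ‖γ‖ < R⁻¹) (hγm : γ ≠ ((m : ℂ))⁻¹)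
    (hγroot : genFun μ γ = 1) :
    memEllR R (fun k => γ ^ k - ((m : ℂ))⁻¹ ^ k) ∧
    (fun k : ℕ => γ ^ k - ((m : ℂ))⁻¹ ^ k) ≠ 0 ∧
    Summable (chiSum μ (fun k => γ ^ k - ((m : ℂ))⁻¹ ^ k)) ∧
    ∀ k, Tseq μ m (fun k => γ ^ k - ((m : ℂ))⁻¹ ^ k) k =
      γ⁻¹ * (γ ^ k - ((m : ℂ))⁻¹ ^ k) := by
  have hm0 : (0:ℝ) < m := lt_trans one_pos hm
  have hR0 : (0:ℝ) < R := lt_of_lt_of_le one_pos hR1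
  set w : ℂ := ((m : ℂ))⁻¹ with hw
  set u : ℕ → ℂ := fun k => γ ^ k - w ^ k with hu
  have hγne : γ ≠ 0 := by
    intro h; rw [h] at hγ0; simp at hγ0
  have hwn : ‖w‖ = m⁻¹ := by
    rw [hw, norm_inv, Complex.norm_real, Real.norm_eq_abs, abs_of_pos hm0]
  have hwne : w ≠ 0 := inv_ne_zero (by exact_mod_cast ne_of_gt hm0)
  have hmR : m⁻¹ < R⁻¹ := by
    exact inv_strictAnti₀ hR0 hRm
  -- summability of the γ-series
  have hγsum : Summable (fun k : ℕ => (μ (k+1) : ℂ) * γ ^ (k+1)) := by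
    apply Summable.of_norm
    refine Summable.of_nonneg_of_le (fun k => norm_nonneg _) (fun k => ?_) hμR
    rw [norm_mul, norm_pow, Complex.norm_real, Real.norm_eq_abs, abs_of_nonneg (hμnn _)]
    exact mul_le_mul_of_nonneg_left
      (pow_le_pow_left₀ (norm_nonneg _) hγR.le _) (hμnn _)
  have hγS : HasSum (fun k : ℕ => (μ (k+1) : ℂ) * γ ^ (k+1)) 1 := by
    have := hγsum.hasSum
    rwa [show (∑' k, (μ (k+1) : ℂ) * γ ^ (k+1)) = genFun μ γ from rfl, hγroot] at this
  have hwS : HasSum (fun k : ℕ => (μ (k+1) : ℂ) * w ^ (k+1)) 1 := by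
    have h := hμm.map Complex.ofRealCLM Complex.ofRealCLM.continuous
    simp only [Function.comp_def, Complex.ofRealCLM_apply, Complex.ofReal_mul,
      Complex.ofReal_pow, Complex.ofReal_inv, Complex.ofReal_one] at h
    exact h
  have hγS' : HasSum (fun k : ℕ => (μ (k+1) : ℂ) * γ ^ k) γ⁻¹ := by
    have := hγS.mul_left γ⁻¹
    rw [mul_one] at this
    convert this using 2 with k
    · rfl
    rw [pow_succ]
    field_simp
  have hwS' : HasSum (fun k : ℕ => (μ (k+1) : ℂ) * w ^ k) w⁻¹ := by
    have := hwS.mul_left w⁻¹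
    rw [mul_one] at this
    convert this using 2 with k
    · rfl
    rw [pow_succ]
    field_simp
  have hchi : HasSum (chiSum μ u) (w⁻¹ - γ⁻¹) := by
    have h := (hγS.sub hγS').sub (hwS.sub hwS')
    have : (1 - γ⁻¹) - (1 - w⁻¹) = w⁻¹ - γ⁻¹ := by ring
    rw [this] at h
    convert h using 2 with k
    · rfl
    simp only [chiSum, hu]
    ring
  refine ⟨?_, ?_, ⟨_, hchi⟩, ?_⟩
  · -- membership in ℓ²_R
    set c : ℝ := max ‖γ‖ m⁻¹ with hc
    have hc0 : 0 ≤ c := le_trans (norm_nonneg _) (le_max_left _ _)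
    have hcR : c < R⁻¹ := max_lt hγR hmR
    have hRc : R * c < 1 := by
      calc R * c < R * R⁻¹ := by
            exact mul_lt_mul_of_pos_left hcR hR0
        _ = 1 := mul_inv_cancel₀ (ne_of_gt hR0)
    unfold memEllR
    refine Summable.of_nonneg_of_le (fun k => by positivity) (fun k => ?_)
      (((summable_geometric_of_lt_one (by positivity) (pow_lt_one₀ (by positivity) hRc two_ne_zero)).mul_left 4) :
        Summable fun k : ℕ => 4 * ((R * c) ^ 2) ^ k)
    · have hub : ‖u k‖ ≤ 2 * c ^ k := by
        calc ‖u k‖ ≤ ‖γ ^ k‖ + ‖w ^ k‖ := norm_sub_le _ _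
          _ = ‖γ‖ ^ k + (m⁻¹) ^ k := by rw [norm_pow, norm_pow, hwn]
          _ ≤ c ^ k + c ^ k := add_le_add
              (pow_le_pow_left₀ (norm_nonneg _) (le_max_left _ _) _)
              (pow_le_pow_left₀ (by positivity) (le_max_right _ _) _)
          _ = 2 * c ^ k := by ring
      calc R ^ (2 * k) * ‖u k‖ ^ 2
          ≤ R ^ (2 * k) * (2 * c ^ k) ^ 2 := by
            apply mul_le_mul_of_nonneg_left _ (by positivity)
            exact pow_le_pow_left₀ (norm_nonneg _) hub 2
        _ = 4 * ((R * c) ^ 2) ^ k := by ring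
  · -- nonzero
    intro h
    have h1 := congrFun h 1
    simp only [hu, pow_one, Pi.zero_apply, hw] at h1
    exact hγm (sub_eq_zero.mp h1)
  · -- eigenvector equation
    have hchiv : chiSeq μ u = w⁻¹ - γ⁻¹ := hchi.tsum_eq
    have hchiv' : (chiSeq μ fun k => γ ^ k - w ^ k) = w⁻¹ - γ⁻¹ := hchiv
    intro k
    cases k with
    | zero => simp [Tseq, shiftSeq, vSeq]
    | succ n =>
      simp only [Tseq, shiftSeq, vSeq, Nat.succ_ne_zero, if_false,
        Nat.add_sub_cancel, hchiv, hchiv', hu]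
      rw [← hw]
      field_simp
      ring
end
end

section
/- Suppose 1 ≤ R < m and Σ_{k≥1} μ_k R^{−k} < ∞. Let λ be a complex number with |λ| > R and μ̂(1/λ) ≠ 1. Then the sequence f := ((1−λ)⁻¹·(1 − μ̂(1/λ))⁻¹·(λ^{−k} − m^{−k}))_{k≥0} belongs to ℓ²_R and satisfies (λ·Id − T)(f) = v; in particular, whenever λ·Id − T is invertible, (λ·Id − T)⁻¹(v) = f. -/
open scoped BigOperators ENNReal

noncomputable section

/-- If `|λ| > R` and `μ̂(1/λ) ≠ 1`, then
`f_k = (1−λ)⁻¹ (1−μ̂(1/λ))⁻¹ (λ^{-k} − m^{-k})` lies in `ℓ²_R` and `(λ·Id − T) f = v`;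
in particular, whenever `λ·Id − T` is invertible, `(λ·Id − T)⁻¹ v = f`. -/
theorem statement6
    (μ : ℕ → ℝ) (m R : ℝ)
    (hm : 1 < m) (hμnn : ∀ k, 0 ≤ μ k)
    (hμm : HasSum (fun k : ℕ => μ (k + 1) * (m⁻¹) ^ (k + 1)) 1)
    (hR1 : 1 ≤ R) (hRm : R < m)
    (hμR : Summable fun k : ℕ => μ (k + 1) * (R⁻¹) ^ (k + 1))
    (lam : ℂ) (hlam : R < ‖lam‖) (hroot : genFun μ lam⁻¹ ≠ 1)
    (f : ℕ → ℂ)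
    (hf : f = fun k => (1 - lam)⁻¹ * (1 - genFun μ lam⁻¹)⁻¹ * (lam⁻¹ ^ k - ((m : ℂ))⁻¹ ^ k)) :
    memEllR R f ∧
    Summable (chiSum μ f) ∧
    (∀ k, lam * f k - Tseq μ m f k = vSeq m k) ∧
    (∀ T' : H2 →L[ℂ] H2, Intertwines μ m R T' →
      IsUnit (algebraMap ℂ (H2 →L[ℂ] H2) lam - T') →
      ∀ vb fb : H2, (∀ k, (vb : ℕ → ℂ) k = toModel R (vSeq m) k) →
        (∀ k, (fb : ℕ → ℂ) k = toModel R f k) →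
        Ring.inverse (algebraMap ℂ (H2 →L[ℂ] H2) lam - T') vb = fb) := by
  have hR0 : (0:ℝ) < R := lt_of_lt_of_le one_pos hR1
  have hRC : (R:ℂ) ≠ 0 := by exact_mod_cast hR0.ne'
  have hm0 : (0:ℝ) < m := lt_trans one_pos hm
  have hmC : (m:ℂ) ≠ 0 := by exact_mod_cast hm0.ne'
  have hlamR : (0:ℝ) < ‖lam‖ := lt_trans hR0 hlam
  have hlam0 : lam ≠ 0 := by simpa using hlamR.ne'
  have hlam1 : (1:ℂ) - lam ≠ 0 := by
    intro h
    have hl : lam = 1 := by linear_combination -h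
    rw [hl] at hlam; simp at hlam; linarith
  set g := genFun μ lam⁻¹ with hgdef
  set c := (1 - lam)⁻¹ * (1 - g)⁻¹ with hcdef
  have hroot' : (1:ℂ) - g ≠ 0 := sub_ne_zero_of_ne (Ne.symm hroot)
  have hfk : ∀ k, f k = c * (lam⁻¹ ^ k - ((m:ℂ))⁻¹ ^ k) := by
    intro k; rw [hf]
  have hlinv : ‖lam⁻¹‖ ≤ R⁻¹ := by
    rw [norm_inv]; exact inv_anti₀ hR0 hlam.le
  have hmn : ‖((m:ℂ))⁻¹‖ = m⁻¹ := by
    rw [norm_inv, Complex.norm_real, Real.norm_eq_abs, abs_of_pos hm0]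
  -- summability of μ_{k+1} λ^{-(k+1)}
  have hSlam : Summable (fun k : ℕ => (μ (k+1):ℂ) * (lam⁻¹)^(k+1)) := by
    apply Summable.of_norm
    apply Summable.of_nonneg_of_le (fun k => norm_nonneg _) _ hμR
    intro k
    rw [norm_mul, norm_pow, Complex.norm_real, Real.norm_eq_abs, abs_of_nonneg (hμnn _)]
    exact mul_le_mul_of_nonneg_left (pow_le_pow_left₀ (norm_nonneg _) hlinv _) (hμnn _)
  have hg : HasSum (fun k : ℕ => (μ (k+1):ℂ) * (lam⁻¹)^(k+1)) g := by
    rw [hgdef, genFun]; exact hSlam.hasSum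
  have hSm : HasSum (fun k : ℕ => (μ (k+1):ℂ) * ((m:ℂ)⁻¹)^(k+1)) 1 := by
    have h := hμm.map (Complex.ofRealHom : ℝ →+* ℂ).toAddMonoidHom Complex.continuous_ofReal
    simp only [RingHom.toAddMonoidHom_eq_coe, AddMonoidHom.coe_coe] at h
    have he : (fun k : ℕ => (μ (k+1):ℂ) * ((m:ℂ)⁻¹)^(k+1))
        = (⇑Complex.ofRealHom ∘ fun k => μ (k + 1) * m⁻¹ ^ (k + 1)) := by
      funext k
      simp only [Function.comp_apply, Complex.ofRealHom_eq_coe]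
      push_cast
      ring
    rw [he]
    simpa using h
  have hSlam' : HasSum (fun k : ℕ => (μ (k+1):ℂ) * (lam⁻¹)^k) (lam * g) := by
    have h := hg.mul_left lam
    convert h using 1
    · rfl
    funext k
    rw [pow_succ]
    field_simp
  have hSm' : HasSum (fun k : ℕ => (μ (k+1):ℂ) * ((m:ℂ)⁻¹)^k) (m:ℂ) := by
    have h := hSm.mul_left (m:ℂ)
    rw [mul_one] at h
    convert h using 1
    · rfl
    funext k
    rw [pow_succ]
    field_simp
  -- χ(f)
  have hchiHS : HasSum (chiSum μ f)
      (c * (lam⁻¹ - 1) * (lam * g) - c * (((m:ℂ))⁻¹ - 1) * (m:ℂ)) := by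
    have h := (hSlam'.mul_left (c * (lam⁻¹ - 1))).sub (hSm'.mul_left (c * (((m:ℂ))⁻¹ - 1)))
    convert h using 1
    · rfl
    funext k
    simp only [chiSum, hfk]
    ring
  have hchi : chiSeq μ f = c * (lam⁻¹ - 1) * (lam * g) - c * (((m:ℂ))⁻¹ - 1) * (m:ℂ) := by
    rw [chiSeq]; exact hchiHS.tsum_eq
  have e1 : (1 - lam) * (1 - lam)⁻¹ = 1 := mul_inv_cancel₀ hlam1
  have e2 : (1 - g) * (1 - g)⁻¹ = 1 := mul_inv_cancel₀ hroot'
  have e3 : lam⁻¹ * lam = 1 := inv_mul_cancel₀ hlam0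
  have e4 : ((m:ℂ))⁻¹ * (m:ℂ) = 1 := inv_mul_cancel₀ hmC
  have hkey : c * ((m:ℂ) - lam) - chiSeq μ f = 1 := by
    rw [hchi, hcdef]
    linear_combination (-((1 - lam)⁻¹ * (1 - g)⁻¹ * g)) * e3
      + ((1 - lam)⁻¹ * (1 - g)⁻¹) * e4 + ((1 - g)⁻¹ * (1 - g)) * e1 + e2
  -- pointwise identity
  have hpt : ∀ k, lam * f k - Tseq μ m f k = vSeq m k := by
    intro k
    cases k with
    | zero => simp [Tseq, shiftSeq, vSeq, hfk]
    | succ n =>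
      simp only [Tseq, shiftSeq, vSeq, Nat.succ_ne_zero, if_false, Nat.add_sub_cancel,
        hfk]
      have h1 : lam * lam⁻¹ ^ (n+1) = lam⁻¹ ^ n := by
        calc lam * lam⁻¹ ^ (n+1) = (lam * lam⁻¹) * lam⁻¹ ^ n := by rw [pow_succ]; ring
          _ = lam⁻¹ ^ n := by rw [mul_inv_cancel₀ hlam0, one_mul]
      have h2 : (m:ℂ) * ((m:ℂ))⁻¹ ^ (n+1) = ((m:ℂ))⁻¹ ^ n := by
        calc (m:ℂ) * ((m:ℂ))⁻¹ ^ (n+1) = ((m:ℂ) * ((m:ℂ))⁻¹) * ((m:ℂ))⁻¹ ^ n := by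
              rw [pow_succ]; ring
          _ = ((m:ℂ))⁻¹ ^ n := by rw [mul_inv_cancel₀ hmC, one_mul]
      linear_combination (((m:ℂ))⁻¹ ^ (n+1)) * hkey + c * h1 - c * h2
  -- membership in ℓ²_R
  have hq1 : R * ‖lam⁻¹‖ < 1 := by
    rw [norm_inv, ← div_eq_mul_inv, div_lt_one hlamR]; exact hlam
  have hq2 : R * m⁻¹ < 1 := by
    rw [← div_eq_mul_inv, div_lt_one hm0]; exact hRm
  set q := max (R * ‖lam⁻¹‖) (R * m⁻¹) with hqdef
  have hq0 : 0 ≤ q := le_trans (by positivity) (le_max_right _ _)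
  have hq : q < 1 := max_lt hq1 hq2
  have hbound : ∀ k, R ^ k * ‖f k‖ ≤ 2 * ‖c‖ * q ^ k := by
    intro k
    have h1 : ‖f k‖ ≤ ‖c‖ * (‖lam⁻¹‖ ^ k + m⁻¹ ^ k) := by
      rw [hfk k, norm_mul]
      have := norm_sub_le (lam⁻¹ ^ k) (((m:ℂ))⁻¹ ^ k)
      rw [norm_pow, norm_pow, hmn] at this
      exact mul_le_mul_of_nonneg_left this (norm_nonneg _)
    calc R ^ k * ‖f k‖ ≤ R ^ k * (‖c‖ * (‖lam⁻¹‖ ^ k + m⁻¹ ^ k)) :=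
          mul_le_mul_of_nonneg_left h1 (pow_nonneg hR0.le k)
      _ = ‖c‖ * ((R * ‖lam⁻¹‖) ^ k + (R * m⁻¹) ^ k) := by
          rw [mul_pow, mul_pow]; ring
      _ ≤ ‖c‖ * (q ^ k + q ^ k) := by
          have e1 : (R * ‖lam⁻¹‖) ^ k ≤ q ^ k :=
            pow_le_pow_left₀ (by positivity) (le_max_left _ _) k
          have e2 : (R * m⁻¹) ^ k ≤ q ^ k :=
            pow_le_pow_left₀ (by positivity) (le_max_right _ _) k
          exact mul_le_mul_of_nonneg_left (add_le_add e1 e2) (norm_nonneg _)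
      _ = 2 * ‖c‖ * q ^ k := by ring
  have hmem : memEllR R f := by
    rw [memEllR]
    apply Summable.of_nonneg_of_le (fun k => by positivity) (fun k => ?_)
      ((summable_geometric_of_lt_one (r := q ^ 2) (by positivity) (by nlinarith)).mul_left ((2 * ‖c‖) ^ 2))
    calc R ^ (2*k) * ‖f k‖ ^ 2 = (R ^ k * ‖f k‖) ^ 2 := by ring
      _ ≤ (2 * ‖c‖ * q ^ k) ^ 2 := by
          apply pow_le_pow_left₀ (by positivity) (hbound k)
      _ = (2 * ‖c‖) ^ 2 * (q ^ 2) ^ k := by ring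
  refine ⟨hmem, hchiHS.summable, hpt, ?_⟩
  intro T' hI hU vb fb hvb hfb
  have hfrom : fromModel R (fb : ℕ → ℂ) = f := by
    funext k
    rw [fromModel, hfb k, toModel]
    field_simp
    rw [one_div, ← mul_pow, inv_mul_cancel₀ hRC, one_pow, one_mul]
  have hApp : (algebraMap ℂ (H2 →L[ℂ] H2) lam - T') fb = vb := by
    apply lp.ext
    funext k
    have hT := hI fb k
    rw [hfrom] at hT
    have hco : ((((algebraMap ℂ (H2 →L[ℂ] H2) lam - T') fb) : H2) : ℕ → ℂ) k
        = lam * (fb : ℕ → ℂ) k - ((T' fb : H2) : ℕ → ℂ) k := by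
      rw [ContinuousLinearMap.sub_apply, lp.coeFn_sub, Pi.sub_apply,
        Algebra.algebraMap_eq_smul_one, ContinuousLinearMap.smul_apply,
        ContinuousLinearMap.one_apply, lp.coeFn_smul, Pi.smul_apply, smul_eq_mul]
    rw [hco, hT, hvb k, hfb k]
    simp only [toModel]
    linear_combination ((R:ℂ) ^ k) * hpt k
  rw [← hU.unit_spec, Ring.inverse_unit]
  rw [← hU.unit_spec] at hApp
  rw [← hApp, ← ContinuousLinearMap.mul_apply, Units.inv_mul]
  simp
end
end

section
/- Let (Ω, F, P) be a probability space with a filtration (F_n)_{n≥−1} (F_{−1} trivial), let m > 1 and m^{−1/2} < r ≤ 1 be reals, and let C₀, c > 0 be constants. Suppose: for each n ≥ 0, B_n is a nonnegative, F_{n−1}-measurable, integrable random variable with E[B_n] ≤ C₀·mⁿ; and for each n ≥ 0 and k ≥ 1, W_{n,k} is an F_n-measurable square-integrable random variable with E[W_{n,k} | F_{n−1}] = 0 and E[W_{n,k}² | F_{n−1}] ≤ c·r^{−2k}·B_n almost surely. Set W_{n,k} := 0 for n < 0 and define W_n := Σ_{k=1}^{n} W_{n−k,k} for n ≥ 1.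 Then there exists a constant C < ∞ (depending only on m, r, C₀, c) such that for all n ≥ 1 and k ≥ 1: E[W_{n,k}²] ≤ C·r^{−2k}·mⁿ and E[W_n²] ≤ C·mⁿ. -/
open MeasureTheory
open scoped BigOperators

/-- Second-moment bounds: if each `W_{n,k}` is `F_n`-measurable, centered
given `F_{n-1}`, with conditional second moment at most `c r^{-2k} B_n`, and `E B_n ≤ C₀ mⁿ`,
then `E[W_{n,k}²] ≤ C r^{-2k} mⁿ` and `E[W_n²] ≤ C mⁿ` for `W_n = Σ_{k=1}^n W_{n-k,k}`. -/
theorem statement10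
    {Ω : Type*} {m0 : MeasurableSpace Ω} (P : Measure Ω) [IsProbabilityMeasure P]
    (ℱ : Filtration ℤ m0) (hbot : ℱ (-1) = ⊥)
    (m r C₀ c : ℝ) (hm : 1 < m) (hr1 : r ≤ 1) (hrm : (Real.sqrt m)⁻¹ < r)
    (hC₀ : 0 < C₀) (hc : 0 < c)
    (B : ℕ → Ω → ℝ)
    (hBmeas : ∀ n : ℕ, Measurable[ℱ ((n : ℤ) - 1)] (B n))
    (hBint : ∀ n : ℕ, Integrable (B n) P)
    (hBnn : ∀ n : ℕ, 0 ≤ᵐ[P] B n)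
    (hBbd : ∀ n : ℕ, ∫ ω, B n ω ∂P ≤ C₀ * m ^ n)
    (W : ℕ → ℕ → Ω → ℝ)
    (hWmeas : ∀ n k : ℕ, 1 ≤ k → Measurable[ℱ (n : ℤ)] (W n k))
    (hWsq : ∀ n k : ℕ, 1 ≤ k → MemLp (W n k) 2 P)
    (hWcond : ∀ n k : ℕ, 1 ≤ k → P[W n k|ℱ ((n : ℤ) - 1)] =ᵐ[P] 0)
    (hWvar : ∀ n k : ℕ, 1 ≤ k →
      ∀ᵐ ω ∂P, (P[fun ω' => (W n k ω') ^ 2|ℱ ((n : ℤ) - 1)]) ω ≤ c * r⁻¹ ^ (2 * k) * B n ω)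
    (Wtot : ℕ → Ω → ℝ)
    (hWtot : ∀ n ω, Wtot n ω = ∑ k ∈ Finset.range n, W (n - (k + 1)) (k + 1) ω) :
    ∃ C : ℝ, ∀ n k : ℕ, 1 ≤ n → 1 ≤ k →
      (∫ ω, (W n k ω) ^ 2 ∂P ≤ C * r⁻¹ ^ (2 * k) * m ^ n) ∧
      (∫ ω, (Wtot n ω) ^ 2 ∂P ≤ C * m ^ n) := by
  have hm0 : (0:ℝ) < m := by linarith
  have hsqrt : 0 < Real.sqrt m := Real.sqrt_pos.2 hm0
  have hr0 : 0 < r := lt_trans (inv_pos.2 hsqrt) hrm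
  have hs2 : Real.sqrt m ^ 2 = m := Real.sq_sqrt hm0.le
  have h1rm : 1 < r * Real.sqrt m := by
    have := mul_lt_mul_of_pos_right hrm hsqrt
    rwa [inv_mul_cancel₀ hsqrt.ne'] at this
  set q : ℝ := r⁻¹ ^ 2 / m with hq
  have hq0 : 0 < q := by positivity
  have hq1 : q < 1 := by
    rw [hq, div_lt_one hm0, inv_pow, inv_eq_one_div, div_lt_iff₀ (by positivity)]
    nlinarith [hs2, h1rm, Real.sqrt_nonneg m, hr0]
  have h1q : 0 < 1 - q := by linarith
  set C : ℝ := c * C₀ / (1 - q) with hC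
  have hCge : c * C₀ ≤ C := by
    rw [hC, le_div_iff₀ h1q]
    nlinarith [mul_nonneg (mul_pos hc hC₀).le hq0.le]
  have hC0 : 0 < C := lt_of_lt_of_le (by positivity) hCge
  -- basic second-moment bound
  have hA : ∀ (n k : ℕ), 1 ≤ k →
      ∫ ω, (W n k ω) ^ 2 ∂P ≤ c * C₀ * (r⁻¹ ^ (2 * k) * m ^ n) := by
    intro n k hk
    have h1 : ∫ ω, (W n k ω) ^ 2 ∂P
        = ∫ ω, (P[fun ω' => (W n k ω') ^ 2|ℱ ((n : ℤ) - 1)]) ω ∂P :=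
      (integral_condExp (ℱ.le _)).symm
    rw [h1]
    calc ∫ ω, (P[fun ω' => (W n k ω') ^ 2|ℱ ((n : ℤ) - 1)]) ω ∂P
        ≤ ∫ ω, c * r⁻¹ ^ (2 * k) * B n ω ∂P :=
          integral_mono_ae integrable_condExp ((hBint n).const_mul _) (hWvar n k hk)
      _ = c * r⁻¹ ^ (2 * k) * ∫ ω, B n ω ∂P := integral_const_mul _ _
      _ ≤ c * r⁻¹ ^ (2 * k) * (C₀ * m ^ n) :=
          mul_le_mul_of_nonneg_left (hBbd n) (by positivity)
      _ = c * C₀ * (r⁻¹ ^ (2 * k) * m ^ n) := by ring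
  -- integrability of products
  have hmul : ∀ a b k1 k2 : ℕ, 1 ≤ k1 → 1 ≤ k2 →
      Integrable (fun ω => W a k1 ω * W b k2 ω) P := by
    intro a b k1 k2 hk1 hk2
    have h := (hWsq b k2 hk2).smul (hWsq a k1 hk1) (p := 2) (q := 2) (r := 1)
    exact h.integrable le_rfl
  -- orthogonality
  have horth : ∀ a b k1 k2 : ℕ, 1 ≤ k1 → 1 ≤ k2 → (a : ℤ) < (b : ℤ) →
      ∫ ω, W a k1 ω * W b k2 ω ∂P = 0 := by
    intro a b k1 k2 hk1 hk2 hab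
    have hle : ℱ (a : ℤ) ≤ ℱ ((b : ℤ) - 1) := ℱ.mono (by omega)
    have hfm : StronglyMeasurable[ℱ ((b : ℤ) - 1)] (W a k1) :=
      ((hWmeas a k1 hk1).stronglyMeasurable).mono hle
    have hint : Integrable (W a k1 * W b k2) P := hmul a b k1 k2 hk1 hk2
    have hcm := condExp_mul_of_stronglyMeasurable_left hfm hint ((hWsq b k2 hk2).integrable one_le_two)
    have hz : P[W a k1 * W b k2|ℱ ((b : ℤ) - 1)] =ᵐ[P] 0 := by
      refine hcm.trans ?_
      filter_upwards [hWcond b k2 hk2] with ω hω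
      simp only [Pi.mul_apply, Pi.zero_apply] at hω ⊢
      simp [hω]
    have h0 : ∫ ω, (W a k1 * W b k2) ω ∂P = 0 := by
      rw [← integral_condExp (ℱ.le ((b : ℤ) - 1)) (f := W a k1 * W b k2),
        integral_congr_ae hz]
      simp
    simpa using h0
  refine ⟨C, fun n k hn hk => ⟨?_, ?_⟩⟩
  · calc ∫ ω, (W n k ω) ^ 2 ∂P ≤ c * C₀ * (r⁻¹ ^ (2 * k) * m ^ n) := hA n k hk
      _ ≤ C * (r⁻¹ ^ (2 * k) * m ^ n) := mul_le_mul_of_nonneg_right hCge (by positivity)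
      _ = C * r⁻¹ ^ (2 * k) * m ^ n := by ring
  -- second bound
  · have hexp : ∫ ω, (Wtot n ω) ^ 2 ∂P
        = ∑ j ∈ Finset.range n, ∫ ω, (W (n - (j + 1)) (j + 1) ω) ^ 2 ∂P := by
      have h1 : ∀ ω, (Wtot n ω) ^ 2 = ∑ j ∈ Finset.range n, ∑ i ∈ Finset.range n,
          W (n - (j + 1)) (j + 1) ω * W (n - (i + 1)) (i + 1) ω := by
        intro ω
        rw [hWtot, sq, Finset.sum_mul_sum]
      calc ∫ ω, (Wtot n ω) ^ 2 ∂P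
          = ∫ ω, ∑ j ∈ Finset.range n, ∑ i ∈ Finset.range n,
              W (n - (j + 1)) (j + 1) ω * W (n - (i + 1)) (i + 1) ω ∂P := by
            exact integral_congr_ae (Filter.Eventually.of_forall h1)
        _ = ∑ j ∈ Finset.range n, ∑ i ∈ Finset.range n,
              ∫ ω, W (n - (j + 1)) (j + 1) ω * W (n - (i + 1)) (i + 1) ω ∂P := by
            rw [integral_finset_sum _ (fun j _ => integrable_finset_sum _
              (fun i _ => hmul _ _ _ _ (Nat.le_add_left 1 j) (Nat.le_add_left 1 i)))]
            exact Finset.sum_congr rfl fun j _ => integral_finset_sum _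
              (fun i _ => hmul _ _ _ _ (Nat.le_add_left 1 j) (Nat.le_add_left 1 i))
        _ = ∑ j ∈ Finset.range n, ∫ ω, (W (n - (j + 1)) (j + 1) ω) ^ 2 ∂P := by
            refine Finset.sum_congr rfl fun j hj => ?_
            have hjn : j + 1 ≤ n := Finset.mem_range.1 hj
            rw [Finset.sum_eq_single_of_mem j hj]
            · exact integral_congr_ae (Filter.Eventually.of_forall fun ω => (sq _).symm)
            · intro i hi hij
              have hin : i + 1 ≤ n := Finset.mem_range.1 hi
              rcases lt_or_gt_of_ne hij with h | h
              · -- i < j : first factor has smaller time index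
                have hlt : ((n - (j + 1) : ℕ) : ℤ) < ((n - (i + 1) : ℕ) : ℤ) := by
                  rw [Nat.cast_sub hjn, Nat.cast_sub hin]; push_cast; omega
                exact horth _ _ _ _ (Nat.le_add_left 1 j) (Nat.le_add_left 1 i) hlt
              · -- j < i
                have hlt : ((n - (i + 1) : ℕ) : ℤ) < ((n - (j + 1) : ℕ) : ℤ) := by
                  rw [Nat.cast_sub hjn, Nat.cast_sub hin]; push_cast; omega
                have := horth _ _ _ _ (Nat.le_add_left 1 i) (Nat.le_add_left 1 j) hlt
                rw [← this]
                exact integral_congr_ae (Filter.Eventually.of_forall fun ω => mul_comm _ _)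
    rw [hexp]
    have hterm : ∀ j ∈ Finset.range n,
        ∫ ω, (W (n - (j + 1)) (j + 1) ω) ^ 2 ∂P ≤ c * C₀ * m ^ n * q ^ (j + 1) := by
      intro j hj
      have hjn : j + 1 ≤ n := Finset.mem_range.1 hj
      refine (hA (n - (j + 1)) (j + 1) (Nat.le_add_left 1 j)).trans (le_of_eq ?_)
      have hms : m ^ (n - (j + 1)) = m ^ n / m ^ (j + 1) := pow_sub₀ m hm0.ne' hjn
      rw [hms, pow_mul, hq, div_pow]
      field_simp
    calc ∑ j ∈ Finset.range n, ∫ ω, (W (n - (j + 1)) (j + 1) ω) ^ 2 ∂P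
        ≤ ∑ j ∈ Finset.range n, c * C₀ * m ^ n * q ^ (j + 1) := Finset.sum_le_sum hterm
      _ = c * C₀ * m ^ n * ∑ j ∈ Finset.range n, q ^ (j + 1) := by
          rw [Finset.mul_sum]
      _ ≤ c * C₀ * m ^ n * (1 / (1 - q)) := by
          refine mul_le_mul_of_nonneg_left ?_ (by positivity)
          calc ∑ j ∈ Finset.range n, q ^ (j + 1)
              ≤ ∑ j ∈ Finset.range n, q ^ j :=
                Finset.sum_le_sum fun j _ =>
                  pow_le_pow_of_le_one hq0.le hq1.le (Nat.le_succ j)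
            _ = (q ^ n - 1) / (q - 1) := geom_sum_eq hq1.ne n
            _ ≤ 1 / (1 - q) := by
                have h2 : (q ^ n - 1) / (q - 1) = (1 - q ^ n) / (1 - q) := by
                  rw [← neg_div_neg_eq]; ring_nf
                rw [h2]
                exact (div_le_div_iff_of_pos_right h1q).2 (by nlinarith [pow_nonneg hq0.le n])
      _ = C * m ^ n := by rw [hC]; ring
end

section
/- Let m > 1 be real, let λ be a real number with |λ| < m^{1/2}, and let σ₁₁, σ₁₂, σ₂₂ be reals. Then ((m−1)/m³)·(1/(2π))·∫₀^{2π} ( σ₁₁·|z(θ)|² + 2σ₁₂·Re(z(θ))·|z(θ)|² + σ₂₂·|z(θ)|⁴ ) / ( |1 − z(θ)|² · |1 − λ·z(θ)|² ) dθ = ( (m+λ)·(σ₁₁ + σ₂₂/m) + 2(1+λ)·σ₁₂ ) / ( m²·(m−λ)·(m−λ²) ), where z(θ) := m^{−1/2}·e^{iθ}. -/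
set_option maxHeartbeats 1000000

open Real
open scoped Real

lemma rc_lt {r : ℝ} (hr : |r| < 1) (θ : ℝ) : |r * Real.cos θ| < 1 := by
  calc |r * Real.cos θ| = |r| * |Real.cos θ| := abs_mul _ _
    _ ≤ |r| * 1 := by gcongr; exact Real.abs_cos_le_one θ
    _ < 1 := by simpa using hr

lemma D_pos {r : ℝ} (hr : |r| < 1) (θ : ℝ) :
    0 < 1 - 2*r*Real.cos θ + r^2 := by
  rcases abs_lt.mp (rc_lt hr θ) with ⟨h1, h2⟩
  have pyth := Real.sin_sq_add_cos_sq θ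
  nlinarith [sq_nonneg (1 - r*Real.cos θ), sq_nonneg (r * Real.sin θ)]

lemma den_pos {r : ℝ} (hr : |r| < 1) (θ : ℝ) : 0 < 1 - r * Real.cos θ := by
  rcases abs_lt.mp (rc_lt hr θ) with ⟨h1, h2⟩; linarith

lemma contD {r : ℝ} (hr : |r| < 1) :
    Continuous fun θ : ℝ => (1 - 2*r*Real.cos θ + r^2)⁻¹ := by
  apply Continuous.inv₀
  · continuity
  · exact fun θ => ne_of_gt (D_pos hr θ)

lemma contD2 {r : ℝ} (hr : |r| < 1) :
    Continuous fun θ : ℝ => ((1 - 2*r*Real.cos θ + r^2)^2)⁻¹ := by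
  apply Continuous.inv₀
  · continuity
  · exact fun θ => pow_ne_zero 2 (ne_of_gt (D_pos hr θ))

lemma hasDerivAt_F {r : ℝ} (hr : |r| < 1) (θ : ℝ) : HasDerivAt
    (fun θ : ℝ => (θ + 2*Real.arctan (r*Real.sin θ/(1 - r*Real.cos θ)))/(1-r^2))
    ((1 - 2*r*Real.cos θ + r^2)⁻¹) θ := by
  have hr2 : r^2 < 1 := by rcases abs_lt.mp hr with ⟨h1, h2⟩; nlinarith
  have hr2' : (1:ℝ) - r^2 ≠ 0 := by linarith [hr2]
  have hden := den_pos hr θ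
  have hD := D_pos hr θ
  have pyth := Real.sin_sq_add_cos_sq θ
  have h1 : HasDerivAt (fun x : ℝ => r * Real.sin x) (r * Real.cos θ) θ :=
    (Real.hasDerivAt_sin θ).const_mul r
  have h2 : HasDerivAt (fun x : ℝ => 1 - r * Real.cos x) (r * Real.sin θ) θ := by
    simpa using ((Real.hasDerivAt_cos θ).const_mul r).const_sub 1
  have h3 := h1.div h2 (ne_of_gt hden)
  have h4 := (Real.hasDerivAt_arctan (r*Real.sin θ/(1 - r*Real.cos θ))).comp θ h3
  have h5 := ((hasDerivAt_id θ).add (h4.const_mul 2)).div_const (1-r^2)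
  refine h5.congr_deriv ?_
  have h7 : r*Real.cos θ*(1 - r*Real.cos θ) - r*Real.sin θ*(r*Real.sin θ)
      = r*Real.cos θ - r^2 := by linear_combination (-(r^2)) * pyth
  have key : 1 + (r*Real.sin θ/(1 - r*Real.cos θ))^2
      = (1 - 2*r*Real.cos θ + r^2)/(1 - r*Real.cos θ)^2 := by
    field_simp
    linear_combination r^2 * pyth
  rw [h7, key]
  field_simp
  ring

lemma integralA {r : ℝ} (hr : |r| < 1) :
    ∫ θ in (0:ℝ)..(2*π), (1 - 2*r*Real.cos θ + r^2)⁻¹ = 2*π/(1-r^2) := by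
  rw [intervalIntegral.integral_eq_sub_of_hasDerivAt (fun θ _ => hasDerivAt_F hr θ)
    ((contD hr).intervalIntegrable _ _)]
  simp [Real.sin_two_pi, Real.cos_two_pi]

lemma integralB {r : ℝ} (hr : |r| < 1) :
    ∫ θ in (0:ℝ)..(2*π), ((1 - 2*r*Real.cos θ + r^2)^2)⁻¹
      = 2*π*(1+r^2)/(1-r^2)^3 := by
  have hr2 : r^2 < 1 := by rcases abs_lt.mp hr with ⟨h1, h2⟩; nlinarith
  have hr2' : (1:ℝ) - r^2 ≠ 0 := by linarith [hr2]
  have hG : ∀ θ : ℝ, HasDerivAt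
      (fun θ : ℝ => ((1+r^2) * ((θ + 2*Real.arctan (r*Real.sin θ/(1 - r*Real.cos θ)))/(1-r^2))
        + 2*r*Real.sin θ / (1 - 2*r*Real.cos θ + r^2)) / (1-r^2)^2)
      (((1 - 2*r*Real.cos θ + r^2)^2)⁻¹) θ := by
    intro θ
    have hD := D_pos hr θ
    have pyth := Real.sin_sq_add_cos_sq θ
    have h1 := (hasDerivAt_F hr θ).const_mul (1+r^2)
    have h2 : HasDerivAt (fun x : ℝ => 2*r*Real.sin x) (2*r*Real.cos θ) θ :=
      (Real.hasDerivAt_sin θ).const_mul (2*r)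
    have h3 : HasDerivAt (fun x : ℝ => 1 - 2*r*Real.cos x + r^2) (2*r*Real.sin θ) θ := by
      simpa using (((Real.hasDerivAt_cos θ).const_mul (2*r)).const_sub 1).add_const (r^2)
    have h4 := h2.div h3 (ne_of_gt hD)
    have h5 := (h1.add h4).div_const ((1-r^2)^2)
    refine h5.congr_deriv ?_
    have h7 : 2*r*Real.cos θ*(1 - 2*r*Real.cos θ + r^2) - 2*r*Real.sin θ*(2*r*Real.sin θ)
        = 2*r*((1+r^2)*Real.cos θ - 2*r) := by linear_combination (-(4*r^2)) * pyth
    rw [h7]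
    field_simp
    ring
  rw [intervalIntegral.integral_eq_sub_of_hasDerivAt (fun θ _ => hG θ)
    ((contD2 hr).intervalIntegrable _ _)]
  simp [Real.sin_two_pi, Real.cos_two_pi]
  field_simp

lemma master {r s : ℝ} (u v : ℝ) (hr : |r| < 1) (hs : |s| < 1) :
    (∫ θ in (0:ℝ)..(2*π),
      (u + v * Real.cos θ) / ((1 - 2*r*Real.cos θ + r^2) * (1 - 2*s*Real.cos θ + s^2)))
    = 2*π*(u*(1+r*s) + v*(r+s)) / ((1-r^2)*(1-s^2)*(1-r*s)) := by
  have hr2 : r^2 < 1 := by rcases abs_lt.mp hr with ⟨h1, h2⟩; nlinarith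
  have hs2 : s^2 < 1 := by rcases abs_lt.mp hs with ⟨h1, h2⟩; nlinarith
  have hr2' : (1:ℝ) - r^2 ≠ 0 := by linarith
  have hs2' : (1:ℝ) - s^2 ≠ 0 := by linarith
  have hrs : |r*s| < 1 := by
    rw [abs_mul]
    calc |r| * |s| ≤ |r| * 1 := by gcongr
      _ < 1 := by simpa using hr
  have hrs' : (1:ℝ) - r*s ≠ 0 := by rcases abs_lt.mp hrs with ⟨h1, h2⟩; linarith
  by_cases hrseq : r = s
  · subst hrseq
    by_cases hr0 : r = 0
    · subst hr0
      norm_num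
    · have hpt : ∀ θ : ℝ, (u + v * Real.cos θ) /
          ((1 - 2*r*Real.cos θ + r^2) * (1 - 2*r*Real.cos θ + r^2))
          = (u + v*(1+r^2)/(2*r)) * ((1 - 2*r*Real.cos θ + r^2)^2)⁻¹
            + (-v/(2*r)) * (1 - 2*r*Real.cos θ + r^2)⁻¹ := by
        intro θ
        have hD := D_pos hr θ
        field_simp
        ring
      rw [intervalIntegral.integral_congr (fun θ _ => hpt θ),
        intervalIntegral.integral_add (((contD2 hr).intervalIntegrable _ _).const_mul _)
          (((contD hr).intervalIntegrable _ _).const_mul _),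
        intervalIntegral.integral_const_mul, intervalIntegral.integral_const_mul,
        integralA hr, integralB hr]
      field_simp
      ring
  · have hrs0 : r - s ≠ 0 := sub_ne_zero.mpr hrseq
    have hpt : ∀ θ : ℝ, (u + v * Real.cos θ) /
        ((1 - 2*r*Real.cos θ + r^2) * (1 - 2*s*Real.cos θ + s^2))
        = ((2*u*r + (1+r^2)*v)/(2*(r-s)*(1-r*s))) * (1 - 2*r*Real.cos θ + r^2)⁻¹
          + (-(2*u*s + (1+s^2)*v)/(2*(r-s)*(1-r*s))) * (1 - 2*s*Real.cos θ + s^2)⁻¹ := by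
      intro θ
      have hDr := D_pos hr θ
      have hDs := D_pos hs θ
      have hA : 1 - Real.cos θ * 2 * r + r^2 ≠ 0 := by nlinarith
      have hB : 1 - Real.cos θ * 2 * s + s^2 ≠ 0 := by nlinarith
      field_simp
      ring
    rw [intervalIntegral.integral_congr (fun θ _ => hpt θ),
      intervalIntegral.integral_add (((contD hr).intervalIntegrable _ _).const_mul _)
        (((contD hs).intervalIntegrable _ _).const_mul _),
      intervalIntegral.integral_const_mul, intervalIntegral.integral_const_mul,
      integralA hr, integralA hs]
    field_simp
    ring


/-- For `m > 1`, real `lam` with `lam² < m`, and `z(θ) = m^{-1/2} e^{iθ}`. -/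
theorem statement13
    (m lam σ₁₁ σ₁₂ σ₂₂ : ℝ) (hm : 1 < m) (hlam : |lam| < Real.sqrt m)
    (z : ℝ → ℂ) (hz : ∀ θ : ℝ, z θ = ((Real.sqrt m)⁻¹ : ℝ) * Complex.exp (θ * Complex.I)) :
    ((m - 1) / m ^ 3) * (1 / (2 * π)) *
      ∫ θ in (0 : ℝ)..(2 * π),
        (σ₁₁ * ‖z θ‖ ^ 2 + 2 * σ₁₂ * (z θ).re * ‖z θ‖ ^ 2 + σ₂₂ * ‖z θ‖ ^ 4) /
          (‖1 - z θ‖ ^ 2 * ‖1 - (lam : ℂ) * z θ‖ ^ 2)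
      = ((m + lam) * (σ₁₁ + σ₂₂ / m) + 2 * (1 + lam) * σ₁₂) /
          (m ^ 2 * (m - lam) * (m - lam ^ 2)) := by
  set t := Real.sqrt m with htdef
  have ht1 : 1 < t := by
    rw [htdef, show (1:ℝ) = Real.sqrt 1 by simp]
    exact Real.sqrt_lt_sqrt (by norm_num) hm
  have ht0 : 0 < t := by linarith
  have ht2 : t^2 = m := Real.sq_sqrt (by linarith)
  have hr : |t⁻¹| < 1 := by
    rw [abs_of_pos (inv_pos.mpr ht0)]
    exact inv_lt_one_of_one_lt₀ ht1
  have hs : |lam * t⁻¹| < 1 := by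
    rw [abs_mul, abs_of_pos (inv_pos.mpr ht0)]
    calc |lam| * t⁻¹ < t * t⁻¹ := by gcongr
      _ = 1 := mul_inv_cancel₀ (ne_of_gt ht0)
  have hnorm : ∀ w : ℂ, ‖w‖^2 = w.re^2 + w.im^2 := fun w => by
    rw [Complex.sq_norm, Complex.normSq_apply]; ring
  have hre : ∀ θ : ℝ, (z θ).re = t⁻¹ * Real.cos θ := by
    intro θ
    simp [hz θ, Complex.exp_mul_I, Complex.cos_ofReal_re]
  have him : ∀ θ : ℝ, (z θ).im = t⁻¹ * Real.sin θ := by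
    intro θ
    simp [hz θ, Complex.exp_mul_I, Complex.sin_ofReal_re]
  have hz2 : ∀ θ : ℝ, ‖z θ‖^2 = (t⁻¹)^2 := by
    intro θ
    rw [hnorm, hre, him]
    have := Real.sin_sq_add_cos_sq θ
    ring_nf
    nlinarith [this]
  have e3 : ∀ θ : ℝ, ‖1 - z θ‖^2 = 1 - 2*t⁻¹*Real.cos θ + (t⁻¹)^2 := by
    intro θ
    rw [hnorm]
    simp only [Complex.sub_re, Complex.sub_im, Complex.one_re, Complex.one_im, hre, him]
    have := Real.sin_sq_add_cos_sq θ
    nlinarith [this]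
  have e4 : ∀ θ : ℝ, ‖1 - (lam:ℂ) * z θ‖^2
      = 1 - 2*(lam*t⁻¹)*Real.cos θ + (lam*t⁻¹)^2 := by
    intro θ
    rw [hnorm]
    simp only [Complex.sub_re, Complex.sub_im, Complex.one_re, Complex.one_im,
      Complex.mul_re, Complex.mul_im, Complex.ofReal_re, Complex.ofReal_im, hre, him]
    have := Real.sin_sq_add_cos_sq θ
    nlinarith [this]
  have hint : (∫ θ in (0 : ℝ)..(2 * π),
        (σ₁₁ * ‖z θ‖ ^ 2 + 2 * σ₁₂ * (z θ).re * ‖z θ‖ ^ 2 + σ₂₂ * ‖z θ‖ ^ 4) /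
          (‖1 - z θ‖ ^ 2 * ‖1 - (lam : ℂ) * z θ‖ ^ 2))
      = ∫ θ in (0 : ℝ)..(2 * π),
        ((σ₁₁*(t⁻¹)^2 + σ₂₂*(t⁻¹)^4) + (2*σ₁₂*(t⁻¹)^3) * Real.cos θ) /
          ((1 - 2*t⁻¹*Real.cos θ + (t⁻¹)^2) * (1 - 2*(lam*t⁻¹)*Real.cos θ + (lam*t⁻¹)^2)) := by
    apply intervalIntegral.integral_congr
    intro θ _
    dsimp only
    rw [show ‖z θ‖^4 = (‖z θ‖^2)^2 by ring, hz2, e3, e4, hre]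
    ring
  rw [hint, master _ _ hr hs]
  have h1 : (0:ℝ) < 1 - (t⁻¹)^2 := by
    have : (t⁻¹)^2 < 1 := by nlinarith [hr, sq_abs t⁻¹, abs_nonneg t⁻¹]
    linarith
  have h2 : (0:ℝ) < 1 - (lam*t⁻¹)^2 := by
    have : (lam*t⁻¹)^2 < 1 := by nlinarith [hs, sq_abs (lam*t⁻¹), abs_nonneg (lam*t⁻¹)]
    linarith
  have h3 : (0:ℝ) < 1 - t⁻¹*(lam*t⁻¹) := by
    have hl := abs_lt.mp hlam
    have hi : (0:ℝ) < t⁻¹ := inv_pos.mpr ht0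
    have : t⁻¹*(lam*t⁻¹) < 1 := by
      have hlt : lam < t := by rw [htdef] at *; linarith [hl.2]
      calc t⁻¹*(lam*t⁻¹) = lam * (t⁻¹*t⁻¹) := by ring
        _ ≤ |lam| * (t⁻¹*t⁻¹) := by gcongr; exact le_abs_self lam
        _ < t * (t⁻¹*t⁻¹) := by gcongr
        _ = t⁻¹ := by field_simp
        _ ≤ 1 := by rw [inv_le_one_iff₀]; right; linarith
    linarith
  have hπ : (π:ℝ) ≠ 0 := Real.pi_ne_zero
  have hlam2 : lam^2 < m := by
    have hl := abs_lt.mp hlam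
    nlinarith [sq_abs lam, abs_nonneg lam, ht2]
  have h4 : m - lam ≠ 0 := by
    have hl := abs_lt.mp hlam
    have : lam < m := by nlinarith [ht2]
    linarith
  have h5 : m - lam^2 ≠ 0 := by linarith
  have hm0 : m ≠ 0 := by linarith
  have h4t : t^2 - lam ≠ 0 := by rw [ht2]; exact h4
  have h5t : t^2 - lam^2 ≠ 0 := by rw [ht2]; exact h5
  have ht0' : t ≠ 0 := ne_of_gt ht0
  have h1t : t^2 - 1 ≠ 0 := by nlinarith
  have f1 : (1:ℝ) - t⁻¹^2 = (t^2 - 1)/t^2 := by field_simp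
  have f2 : (1:ℝ) - (lam*t⁻¹)^2 = (t^2 - lam^2)/t^2 := by field_simp
  have f3 : (1:ℝ) - t⁻¹*(lam*t⁻¹) = (t^2 - lam)/t^2 := by field_simp
  rw [← ht2, f1, f2, f3]
  field_simp
end

section
/- Suppose 1 ≤ R < m and Σ_{k≥1} μ_k R^{−k} < ∞. Let λ be complex with |λ| > R, λ ≠ m, and μ̂(1/λ) = 1. Define the sequence d(λ) := ( k·λ^{−k−1}/(m−λ) − (λ^{−k} − m^{−k})/(m−λ)² )_{k≥0}. Then d(λ) ∈ ℓ²_R and χ(d(λ)) = (1−λ)·μ̂'(1/λ) / ( (m−λ)·λ² ), where μ̂'(w) := Σ_{k≥1} k·μ_k·w^{k−1}. -/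
open scoped BigOperators ENNReal

noncomputable section

/-- the derivative `μ̂'(w) = Σ_{k≥1} k μ_k w^{k-1}` -/
def dgenFun (μ : ℕ → ℝ) (w : ℂ) : ℂ := ∑' k, ((k + 1 : ℕ) : ℂ) * (μ (k + 1) : ℂ) * w ^ k

lemma aux_summable_pow (p : ℕ) {s : ℝ} (h0 : 0 < s) (h1 : s < 1) :
    Summable fun n : ℕ => ((n : ℝ) + 1) ^ p * s ^ n := by
  have h := summable_pow_mul_geometric_of_norm_lt_one (R := ℝ) p (r := s)
    (by rwa [Real.norm_eq_abs, abs_of_pos h0])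
  have h2 : Summable fun n : ℕ => ((n + 1 : ℕ) : ℝ) ^ p * s ^ (n + 1) :=
    (summable_nat_add_iff 1).2 h
  refine (h2.mul_left s⁻¹).congr fun n => ?_
  have hs : s ≠ 0 := ne_of_gt h0
  push_cast
  rw [pow_succ]
  field_simp

set_option maxHeartbeats 2000000 in
/-- For `|λ| > R`, `λ ≠ m`, `μ̂(1/λ) = 1`, the sequence
`d(λ)_k = k λ^{-k-1}/(m−λ) − (λ^{-k} − m^{-k})/(m−λ)²` lies in `ℓ²_R` and
`χ(d(λ)) = (1−λ) μ̂'(1/λ) / ((m−λ) λ²)`. -/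
theorem statement14
    (μ : ℕ → ℝ) (m R : ℝ)
    (hm : 1 < m) (hμnn : ∀ k, 0 ≤ μ k)
    (hμm : HasSum (fun k : ℕ => μ (k + 1) * (m⁻¹) ^ (k + 1)) 1)
    (hR1 : 1 ≤ R) (hRm : R < m)
    (hμR : Summable fun k : ℕ => μ (k + 1) * (R⁻¹) ^ (k + 1))
    (lam : ℂ) (hlam : R < ‖lam‖) (hlamm : lam ≠ (m : ℂ)) (hroot : genFun μ lam⁻¹ = 1)
    (d : ℕ → ℂ)
    (hd : d = fun k : ℕ => (k : ℂ) * lam⁻¹ ^ (k + 1) / ((m : ℂ) - lam)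
      - (lam⁻¹ ^ k - ((m : ℂ))⁻¹ ^ k) / ((m : ℂ) - lam) ^ 2) :
    memEllR R d ∧
    HasSum (chiSum μ d) ((1 - lam) * dgenFun μ lam⁻¹ / (((m : ℂ) - lam) * lam ^ 2)) := by
  have hR0 : (0:ℝ) < R := lt_of_lt_of_le one_pos hR1
  have hm0 : (0:ℝ) < m := lt_trans one_pos hm
  have hlamnorm : (1:ℝ) < ‖lam‖ := lt_of_le_of_lt hR1 hlam
  have hlampos : (0:ℝ) < ‖lam‖ := lt_trans one_pos hlamnorm
  have hlam0 : lam ≠ 0 := by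
    intro h; rw [h, norm_zero] at hlampos; exact lt_irrefl 0 hlampos
  have hw0 : lam⁻¹ ≠ 0 := inv_ne_zero hlam0
  have hc : (m:ℂ) - lam ≠ 0 := sub_ne_zero.mpr (Ne.symm hlamm)
  have hmC : (m:ℂ) ≠ 0 := by
    simpa using ne_of_gt hm0
  have hmCi : ((m:ℂ))⁻¹ ≠ 0 := inv_ne_zero hmC
  have hnw : ‖lam⁻¹‖ = ‖lam‖⁻¹ := norm_inv lam
  have hnu : ‖((m:ℂ))⁻¹‖ = m⁻¹ := by
    rw [norm_inv, Complex.norm_real, Real.norm_eq_abs, abs_of_pos hm0]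
  -- bound on μ
  set M : ℝ := ∑' k : ℕ, μ (k + 1) * (R⁻¹) ^ (k + 1) with hM
  have hMk : ∀ k, μ (k + 1) ≤ M * R ^ (k + 1) := by
    intro k
    have h1 : μ (k + 1) * (R⁻¹) ^ (k + 1) ≤ M :=
      Summable.le_tsum hμR k (fun j _ => mul_nonneg (hμnn _) (by positivity))
    have h2 : (0:ℝ) < R ^ (k+1) := by positivity
    calc μ (k + 1) = (μ (k + 1) * (R⁻¹) ^ (k + 1)) * R ^ (k + 1) := by
          rw [inv_pow, inv_mul_cancel_right₀ (pow_ne_zero _ hR0.ne')]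
      _ ≤ M * R ^ (k + 1) := by gcongr
  -- the three series
  have hnormF : ∀ k : ℕ, ‖((k + 1 : ℕ) : ℂ) * (μ (k + 1) : ℂ) * lam⁻¹ ^ k‖
      = ((k:ℝ) + 1) * μ (k + 1) * ‖lam‖⁻¹ ^ k := by
    intro k
    rw [norm_mul, norm_mul, norm_pow, hnw, Complex.norm_natCast, Complex.norm_real,
      Real.norm_eq_abs, abs_of_nonneg (hμnn _)]
    push_cast; ring
  have hs1 : R / ‖lam‖ < 1 := (div_lt_one hlampos).2 hlam
  have hs0 : 0 < R / ‖lam‖ := by positivity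
  have SF : Summable fun k : ℕ => ((k + 1 : ℕ) : ℂ) * (μ (k + 1) : ℂ) * lam⁻¹ ^ k := by
    apply Summable.of_norm
    refine Summable.of_nonneg_of_le (fun k => norm_nonneg _) (fun k => ?_)
      (((aux_summable_pow 1 hs0 hs1).mul_left (M * R)))
    rw [hnormF k]
    have hμle := hMk k
    calc ((k:ℝ) + 1) * μ (k + 1) * ‖lam‖⁻¹ ^ k
        ≤ ((k:ℝ) + 1) * (M * R ^ (k + 1)) * ‖lam‖⁻¹ ^ k := by
          gcongr
      _ = M * R * (((k:ℝ) + 1) ^ 1 * (R / ‖lam‖) ^ k) := by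
          rw [pow_succ, pow_one, div_pow]
          field_simp
          have hx : ‖lam‖ ^ k * ‖lam‖⁻¹ ^ k = 1 := by
            rw [← mul_pow, mul_inv_cancel₀ hlampos.ne', one_pow]
          linear_combination M * hx
  have hF : HasSum (fun k : ℕ => ((k + 1 : ℕ) : ℂ) * (μ (k + 1) : ℂ) * lam⁻¹ ^ k)
      (dgenFun μ lam⁻¹) := SF.hasSum
  have SG : Summable fun k : ℕ => (μ (k + 1) : ℂ) * lam⁻¹ ^ (k + 1) := by
    apply Summable.of_norm
    refine Summable.of_nonneg_of_le (fun k => norm_nonneg _) (fun k => ?_) hμR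
    rw [norm_mul, norm_pow, hnw, Complex.norm_real, Real.norm_eq_abs,
      abs_of_nonneg (hμnn _)]
    gcongr <;> first
      | exact hμnn _
      | exact inv_anti₀ hR0 (le_of_lt hlam)
  have hG : HasSum (fun k : ℕ => (μ (k + 1) : ℂ) * lam⁻¹ ^ (k + 1)) 1 := by
    have h := SG.hasSum
    rwa [show (∑' k : ℕ, (μ (k + 1) : ℂ) * lam⁻¹ ^ (k + 1)) = genFun μ lam⁻¹ from rfl,
      hroot] at h
  have hH : HasSum (fun k : ℕ => (μ (k + 1) : ℂ) * ((m:ℂ))⁻¹ ^ (k + 1)) 1 := by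
    have h := (Complex.hasSum_ofReal).mpr hμm
    have heq : (fun k : ℕ => ((μ (k + 1) * (m⁻¹) ^ (k + 1) : ℝ) : ℂ))
        = fun k : ℕ => (μ (k + 1) : ℂ) * ((m:ℂ))⁻¹ ^ (k + 1) := by
      funext k; push_cast; ring
    rwa [heq] at h
  have hG' : HasSum (fun k : ℕ => (μ (k + 1) : ℂ) * lam⁻¹ ^ k) lam := by
    have h := hG.mul_left lam
    rw [mul_one] at h
    have heq : (fun k : ℕ => lam * ((μ (k + 1) : ℂ) * lam⁻¹ ^ (k + 1)))
        = fun k : ℕ => (μ (k + 1) : ℂ) * lam⁻¹ ^ k := by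
      funext k; rw [pow_succ]; field_simp
    rwa [heq] at h
  have hH' : HasSum (fun k : ℕ => (μ (k + 1) : ℂ) * ((m:ℂ))⁻¹ ^ k) (m:ℂ) := by
    have h := hH.mul_left (m:ℂ)
    rw [mul_one] at h
    have heq : (fun k : ℕ => (m:ℂ) * ((μ (k + 1) : ℂ) * ((m:ℂ))⁻¹ ^ (k + 1)))
        = fun k : ℕ => (μ (k + 1) : ℂ) * ((m:ℂ))⁻¹ ^ k := by
      funext k; rw [pow_succ]; field_simp
    rwa [heq] at h
  -- coefficients
  set a : ℂ := (lam⁻¹ * lam⁻¹ - lam⁻¹) / ((m:ℂ) - lam) with ha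
  set b : ℂ := lam⁻¹ / ((m:ℂ) - lam) - (lam⁻¹ - 1) / (((m:ℂ) - lam) * ((m:ℂ) - lam)) with hb
  set e : ℂ := (((m:ℂ))⁻¹ - 1) / (((m:ℂ) - lam) * ((m:ℂ) - lam)) with he
  have hsum := (hF.mul_left a).add ((hG'.mul_left b).add (hH'.mul_left e))
  have hfun : (fun k : ℕ => a * (((k + 1 : ℕ) : ℂ) * (μ (k + 1) : ℂ) * lam⁻¹ ^ k)
      + (b * ((μ (k + 1) : ℂ) * lam⁻¹ ^ k) + e * ((μ (k + 1) : ℂ) * ((m:ℂ))⁻¹ ^ k)))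
      = chiSum μ d := by
    funext k
    simp only [chiSum, hd, ha, hb, he]
    push_cast
    simp only [pow_succ]
    ring
  rw [hfun] at hsum
  have hval : a * dgenFun μ lam⁻¹ + (b * lam + e * (m:ℂ))
      = (1 - lam) * dgenFun μ lam⁻¹ / (((m : ℂ) - lam) * lam ^ 2) := by
    rw [ha, hb, he]
    field_simp
    ring
  rw [hval] at hsum
  refine ⟨?_, hsum⟩
  -- membership in ℓ²_R
  set t : ℝ := max (R / ‖lam‖) (R / m) with htdef
  have ht0 : 0 < t := lt_of_lt_of_le hs0 (le_max_left _ _)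
  have ht1 : t < 1 := max_lt hs1 ((div_lt_one hm0).2 hRm)
  have hcn : 0 < ‖(m:ℂ) - lam‖ := norm_pos_iff.2 hc
  set C : ℝ := 1 / ‖(m:ℂ) - lam‖ + 2 / ‖(m:ℂ) - lam‖ ^ 2 with hCdef
  have hC0 : 0 < C := by positivity
  have hb1 : R * ‖lam‖⁻¹ ≤ t := by
    rw [← div_eq_mul_inv]; exact le_max_left _ _
  have hb2 : R * m⁻¹ ≤ t := by
    rw [← div_eq_mul_inv]; exact le_max_right _ _
  have hw1 : ‖lam‖⁻¹ ≤ 1 := by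
    rw [inv_le_one_iff₀]; right; exact le_of_lt hlamnorm
  have hkey : ∀ k : ℕ, R ^ k * ‖d k‖ ≤ C * (((k:ℝ) + 1) * t ^ k) := by
    intro k
    have e1 : ‖(k : ℂ) * lam⁻¹ ^ (k + 1) / ((m : ℂ) - lam)‖
        = (k:ℝ) * ‖lam‖⁻¹ ^ (k + 1) / ‖(m:ℂ) - lam‖ := by
      rw [norm_div, norm_mul, norm_pow, hnw, Complex.norm_natCast]
    have e2 : ‖(lam⁻¹ ^ k - ((m : ℂ))⁻¹ ^ k) / ((m : ℂ) - lam) ^ 2‖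
        ≤ (‖lam‖⁻¹ ^ k + m⁻¹ ^ k) / ‖(m:ℂ) - lam‖ ^ 2 := by
      rw [norm_div, norm_pow]
      gcongr
      refine (norm_sub_le _ _).trans ?_
      rw [norm_pow, norm_pow, hnw, hnu]
    have hdk : ‖d k‖ ≤ (k:ℝ) * ‖lam‖⁻¹ ^ (k + 1) / ‖(m:ℂ) - lam‖
        + (‖lam‖⁻¹ ^ k + m⁻¹ ^ k) / ‖(m:ℂ) - lam‖ ^ 2 := by
      rw [hd]
      exact (norm_sub_le _ _).trans (by rw [e1]; gcongr)
    have hA : R ^ k * ((k:ℝ) * ‖lam‖⁻¹ ^ (k + 1) / ‖(m:ℂ) - lam‖)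
        ≤ ((k:ℝ) + 1) * t ^ k / ‖(m:ℂ) - lam‖ := by
      rw [← mul_div_assoc]
      gcongr ?_ / _
      calc R ^ k * ((k:ℝ) * ‖lam‖⁻¹ ^ (k + 1))
          = (k:ℝ) * ‖lam‖⁻¹ * (R * ‖lam‖⁻¹) ^ k := by
            rw [pow_succ, mul_pow]; ring
        _ ≤ (((k:ℝ) + 1)) * 1 * t ^ k := by
            gcongr
            all_goals first | exact hw1 | exact hb1 | linarith
        _ = ((k:ℝ) + 1) * t ^ k := by ring
    have hB : R ^ k * ((‖lam‖⁻¹ ^ k + m⁻¹ ^ k) / ‖(m:ℂ) - lam‖ ^ 2)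
        ≤ 2 * (((k:ℝ) + 1) * t ^ k) / ‖(m:ℂ) - lam‖ ^ 2 := by
      rw [← mul_div_assoc]
      gcongr ?_ / _
      calc R ^ k * (‖lam‖⁻¹ ^ k + m⁻¹ ^ k)
          = (R * ‖lam‖⁻¹) ^ k + (R * m⁻¹) ^ k := by
            rw [mul_pow, mul_pow]; ring
        _ ≤ t ^ k + t ^ k := by
            gcongr
            all_goals first | exact hb1 | exact hb2
        _ ≤ 2 * (((k:ℝ) + 1) * t ^ k) := by
            have h1 : (0:ℝ) ≤ t ^ k := by positivity
            have h2 : (0:ℝ) ≤ (k:ℝ) := Nat.cast_nonneg k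
            have h3 : (0:ℝ) ≤ (k:ℝ) * t ^ k := mul_nonneg h2 h1
            have h4 : 2 * (((k:ℝ) + 1) * t ^ k) = 2 * ((k:ℝ) * t ^ k) + 2 * t ^ k := by
              ring
            linarith
    calc R ^ k * ‖d k‖
        ≤ R ^ k * ((k:ℝ) * ‖lam‖⁻¹ ^ (k + 1) / ‖(m:ℂ) - lam‖
          + (‖lam‖⁻¹ ^ k + m⁻¹ ^ k) / ‖(m:ℂ) - lam‖ ^ 2) := by
          have : (0:ℝ) ≤ R ^ k := by positivity
          exact mul_le_mul_of_nonneg_left hdk this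
      _ = R ^ k * ((k:ℝ) * ‖lam‖⁻¹ ^ (k + 1) / ‖(m:ℂ) - lam‖)
          + R ^ k * ((‖lam‖⁻¹ ^ k + m⁻¹ ^ k) / ‖(m:ℂ) - lam‖ ^ 2) := by ring
      _ ≤ ((k:ℝ) + 1) * t ^ k / ‖(m:ℂ) - lam‖
          + 2 * (((k:ℝ) + 1) * t ^ k) / ‖(m:ℂ) - lam‖ ^ 2 := add_le_add hA hB
      _ = C * (((k:ℝ) + 1) * t ^ k) := by rw [hCdef]; ring
  show Summable fun k => R ^ (2 * k) * ‖d k‖ ^ 2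
  refine Summable.of_nonneg_of_le (fun k => by positivity) (fun k => ?_)
    ((aux_summable_pow 2 (s := t^2) (by positivity) (by nlinarith)).mul_left (C ^ 2))
  calc R ^ (2 * k) * ‖d k‖ ^ 2 = (R ^ k * ‖d k‖) * (R ^ k * ‖d k‖) := by ring
    _ ≤ (C * (((k:ℝ) + 1) * t ^ k)) * (C * (((k:ℝ) + 1) * t ^ k)) :=
        mul_self_le_mul_self (by positivity) (hkey k)
    _ = C ^ 2 * (((k:ℝ) + 1) ^ 2 * (t ^ 2) ^ k) := by ring
end
end
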